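/- arXiv:1701.06608 — 5 statements merged into one kernel-verified Lean document; each statement's English description precedes it below -/
import Mathlib

section
/- Let $\mathcal{I}$ be a finite nonempty set and $z_i \in \mathbb{C}$ for $i \in \mathcal{I}$ with $\sum_{i\in\mathcal{I}} z_i = 1$ and no $z_i$ a nonpositive integer. Then $\sum_{\mathcal{H}\subseteq\mathcal{I}} \frac{\prod_{i\in\mathcal{I}}\Gamma(z_i)}{\Gamma(\sum_{i\in\mathcal{H}}z_i)\Gamma(\sum_{i\in\mathcal{I}\setminus\mathcal{H}}z_i)} = 2\pi^{|\mathcal{I}|/2 - 1}\prod_{i\in\mathcal{I}}\frac{\Gamma(z_i/2)}{\Gamma((1-z_i)/2)}$. -/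
open Finset

private lemma inv_Gamma_mul' (s : ℂ) : (Complex.Gamma s * Complex.Gamma (1 - s))⁻¹
    = Complex.sin (Real.pi * s) / Real.pi := by
  rw [Complex.Gamma_mul_Gamma_one_sub]
  rcases eq_or_ne (Complex.sin (Real.pi * s)) 0 with h | h
  · simp [h]
  · rw [inv_div]

private lemma key_dup' (w : ℂ) (hw : ∀ n : ℕ, w ≠ -(n:ℂ)) :
    Complex.Gamma w * (2 * Complex.cos (Real.pi * w / 2)) =
      ((Real.sqrt Real.pi : ℝ) : ℂ) * 2 ^ w *
        (Complex.Gamma (w / 2) / Complex.Gamma ((1 - w) / 2)) := by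
  have hπ : (Real.pi : ℂ) ≠ 0 := by exact_mod_cast Real.pi_ne_zero
  rcases eq_or_ne (Complex.cos (Real.pi * w / 2)) 0 with hc | hc
  · obtain ⟨k, hk⟩ := Complex.cos_eq_zero_iff.mp hc
    have hwk : w = 2 * (k : ℂ) + 1 := by
      field_simp at hk
      linear_combination hk
    have hk0 : 0 ≤ k := by
      by_contra hneg
      push_neg at hneg
      have hn : (0:ℤ) ≤ -(2*k+1) := by omega
      refine hw (-(2*k+1)).toNat ?_
      rw [hwk, ← Int.cast_natCast (R := ℂ), Int.toNat_of_nonneg hn]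
      push_cast
      ring
    have hG : Complex.Gamma ((1 - w) / 2) = 0 := by
      have h1 : ((1:ℂ) - w) / 2 = -(k.toNat : ℂ) := by
        rw [hwk, ← Int.cast_natCast (R := ℂ), Int.toNat_of_nonneg hk0]
        push_cast
        ring
      rw [h1, Complex.Gamma_neg_nat_eq_zero]
    rw [hc, hG, div_zero]
    ring
  · have hdup := Complex.Gamma_mul_Gamma_add_half (w / 2)
    rw [show 2 * (w/2) = w by ring, show (w/2 + 1/2 : ℂ) = (1+w)/2 by ring] at hdup
    have hrefl := Complex.Gamma_mul_Gamma_one_sub ((1 + w) / 2)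
    rw [show (1:ℂ) - (1+w)/2 = (1-w)/2 by ring,
      show (Real.pi:ℂ) * ((1 + w) / 2) = Real.pi * w / 2 + Real.pi/2 by ring,
      Complex.sin_add_pi_div_two] at hrefl
    have hΓprod : Complex.Gamma ((1+w)/2) * Complex.Gamma ((1-w)/2) ≠ 0 := by
      rw [hrefl]; exact div_ne_zero hπ hc
    have hΓp : Complex.Gamma ((1+w)/2) ≠ 0 := fun h => hΓprod (by rw [h, zero_mul])
    have hΓm : Complex.Gamma ((1-w)/2) ≠ 0 := fun h => hΓprod (by rw [h, mul_zero])
    have h2 : (2:ℂ) ^ ((1:ℂ) - w) * 2 ^ w = 2 := by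
      rw [← Complex.cpow_add _ _ two_ne_zero]; norm_num
    have hππ : ((Real.sqrt Real.pi : ℝ):ℂ) * ((Real.sqrt Real.pi : ℝ):ℂ) = (Real.pi:ℂ) := by
      rw [← Complex.ofReal_mul, Real.mul_self_sqrt Real.pi_pos.le]
    have hrefl' : Complex.Gamma ((1+w)/2) * Complex.Gamma ((1-w)/2)
        * Complex.cos (Real.pi * w / 2) = Real.pi := by
      rw [hrefl]; field_simp
    apply mul_right_cancel₀ hΓp
    field_simp
    refine mul_right_cancel₀ hΓp ?_
    linear_combination (2 * Complex.Gamma w) * hrefl'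
      - (((Real.sqrt Real.pi : ℝ):ℂ) * 2 ^ w) * hdup
      - (Complex.Gamma w * ((Real.sqrt Real.pi : ℝ):ℂ) * ((Real.sqrt Real.pi : ℝ):ℂ)) * h2
      - (2 * Complex.Gamma w) * hππ

private lemma sum_sin' {ι : Type*} [DecidableEq ι] (I : Finset ι) (z : ι → ℂ)
    (hsum : ∑ i ∈ I, z i = 1) :
    ∑ H ∈ I.powerset, Complex.sin (Real.pi * ∑ i ∈ H, z i)
      = ∏ i ∈ I, (2 * Complex.cos (Real.pi * z i / 2)) := by
  have hexp : ∀ c : ℂ, ∑ H ∈ I.powerset, Complex.exp (c * ∑ i ∈ H, z i)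
      = ∏ i ∈ I, (Complex.exp (c * z i) + 1) := by
    intro c
    rw [Finset.prod_add]
    exact (Finset.sum_congr rfl fun H _ => by
      rw [Finset.prod_const_one, mul_one, Finset.mul_sum, Complex.exp_sum]).symm
  have hf : ∀ c : ℂ, (∀ x : ℂ, Complex.exp (c*x/2) + Complex.exp (-(c*x/2))
        = 2 * Complex.cos (Real.pi * x / 2)) →
      ∏ i ∈ I, (Complex.exp (c * z i) + 1)
        = Complex.exp (c/2) * ∏ i ∈ I, (2 * Complex.cos (Real.pi * z i / 2)) := by
    intro c hcx
    have hstep : ∀ i ∈ I, Complex.exp (c * z i) + 1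
        = Complex.exp (c * z i / 2) * (2 * Complex.cos (Real.pi * z i / 2)) := by
      intro i _
      rw [← hcx (z i), mul_add, ← Complex.exp_add, ← Complex.exp_add]
      rw [show c * z i / 2 + c * z i / 2 = c * z i by ring,
        show c * z i / 2 + -(c * z i / 2) = 0 by ring, Complex.exp_zero]
    rw [Finset.prod_congr rfl hstep, Finset.prod_mul_distrib, ← Complex.exp_sum]
    congr 2
    calc ∑ i ∈ I, c * z i / 2 = (c/2) * ∑ i ∈ I, z i := by
          rw [Finset.mul_sum]; exact Finset.sum_congr rfl fun i _ => by ring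
      _ = c/2 := by rw [hsum, mul_one]
  have hA := hf (Real.pi * Complex.I) (fun x => by
    simp only [Complex.cos]
    rw [show (Real.pi:ℂ) * Complex.I * x / 2 = (Real.pi * x / 2) * Complex.I by ring]
    ring)
  have hB := hf (-(Real.pi * Complex.I)) (fun x => by
    simp only [Complex.cos]
    rw [show -((Real.pi:ℂ) * Complex.I) * x / 2 = -((Real.pi * x / 2) * Complex.I) by ring]
    ring)
  have heI : Complex.exp (Real.pi * Complex.I / 2) = Complex.I := by
    rw [show (Real.pi:ℂ) * Complex.I / 2 = ((Real.pi/2 : ℝ):ℂ) * Complex.I by push_cast; ring,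
      Complex.exp_mul_I]
    simp
  have heI' : Complex.exp (-(Real.pi * Complex.I) / 2) = -Complex.I := by
    rw [show -((Real.pi:ℂ) * Complex.I) / 2 = ((-(Real.pi/2) : ℝ):ℂ) * Complex.I by push_cast; ring,
      Complex.exp_mul_I]
    simp
  have hsin : ∀ s : ℂ, Complex.sin (Real.pi * s)
      = (Complex.exp (-(Real.pi * Complex.I) * s)
          - Complex.exp ((Real.pi * Complex.I) * s)) * Complex.I / 2 := by
    intro s
    simp only [Complex.sin]
    rw [show -((Real.pi:ℂ) * s) * Complex.I = -(Real.pi * Complex.I) * s by ring,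
      show ((Real.pi:ℂ) * s) * Complex.I = (Real.pi * Complex.I) * s by ring]
  calc ∑ H ∈ I.powerset, Complex.sin (Real.pi * ∑ i ∈ H, z i)
      = ∑ H ∈ I.powerset, ((Complex.exp (-(Real.pi * Complex.I) * ∑ i ∈ H, z i)
          - Complex.exp ((Real.pi * Complex.I) * ∑ i ∈ H, z i)) * Complex.I / 2) :=
        Finset.sum_congr rfl fun H _ => hsin _
    _ = ((∑ H ∈ I.powerset, Complex.exp (-(Real.pi * Complex.I) * ∑ i ∈ H, z i))
          - ∑ H ∈ I.powerset, Complex.exp ((Real.pi * Complex.I) * ∑ i ∈ H, z i))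
          * Complex.I / 2 := by
        rw [← Finset.sum_sub_distrib, ← Finset.sum_div, ← Finset.sum_mul]
    _ = ∏ i ∈ I, (2 * Complex.cos (Real.pi * z i / 2)) := by
        rw [hexp, hexp, hA, hB, heI, heI']
        set P := ∏ i ∈ I, (2 * Complex.cos ((Real.pi:ℂ) * z i / 2)) with hP
        linear_combination (-P) * Complex.I_mul_I

private lemma prod_cpow' {ι : Type*} (s : Finset ι) (f : ι → ℂ) (x : ℂ) (hx : x ≠ 0) :
    ∏ i ∈ s, x ^ f i = x ^ (∑ i ∈ s, f i) := by
  classical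
  induction s using Finset.cons_induction with
  | empty => simp
  | cons a s ha ih => rw [Finset.prod_cons, Finset.sum_cons, Complex.cpow_add _ _ hx, ih]

theorem gamma_subset_sum_identity {ι : Type*} [DecidableEq ι] (I : Finset ι)
    (hI : I.Nonempty) (z : ι → ℂ) (hsum : ∑ i ∈ I, z i = 1)
    (hz : ∀ i ∈ I, ∀ n : ℕ, z i ≠ -(n : ℂ)) :
    ∑ H ∈ I.powerset,
      (∏ i ∈ I, Complex.Gamma (z i)) /
        (Complex.Gamma (∑ i ∈ H, z i) * Complex.Gamma (∑ i ∈ I \ H, z i)) =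
      2 * (Real.pi : ℂ) ^ ((I.card : ℂ) / 2 - 1) *
        ∏ i ∈ I, Complex.Gamma (z i / 2) / Complex.Gamma ((1 - z i) / 2) := by
  have hπ : (Real.pi : ℂ) ≠ 0 := by exact_mod_cast Real.pi_ne_zero
  have h1 : ∀ H ∈ I.powerset,
      (∏ i ∈ I, Complex.Gamma (z i)) /
        (Complex.Gamma (∑ i ∈ H, z i) * Complex.Gamma (∑ i ∈ I \ H, z i))
      = (∏ i ∈ I, Complex.Gamma (z i))
          * (Complex.sin (Real.pi * ∑ i ∈ H, z i) / Real.pi) := by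
    intro H hH
    have hsd : ∑ i ∈ I \ H, z i = 1 - ∑ i ∈ H, z i := by
      rw [Finset.sum_sdiff_eq_sub (Finset.mem_powerset.mp hH), hsum]
    rw [hsd, div_eq_mul_inv, inv_Gamma_mul']
  rw [Finset.sum_congr rfl h1, ← Finset.mul_sum, ← Finset.sum_div, sum_sin' I z hsum,
    mul_div_assoc', ← Finset.prod_mul_distrib]
  have h2 : ∀ i ∈ I, Complex.Gamma (z i) * (2 * Complex.cos (Real.pi * z i / 2))
      = ((Real.sqrt Real.pi : ℝ) : ℂ) * 2 ^ (z i)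
        * (Complex.Gamma (z i / 2) / Complex.Gamma ((1 - z i) / 2)) :=
    fun i hi => key_dup' (z i) (hz i hi)
  rw [Finset.prod_congr rfl h2, Finset.prod_mul_distrib, Finset.prod_mul_distrib,
    Finset.prod_const, prod_cpow' I z 2 two_ne_zero, hsum, Complex.cpow_one]
  have h3 : ((Real.sqrt Real.pi : ℝ) : ℂ) ^ I.card
      = (Real.pi : ℂ) ^ ((I.card : ℂ) / 2) := by
    have h12 : ((Real.sqrt Real.pi : ℝ) : ℂ) = (Real.pi : ℂ) ^ ((1:ℂ)/2) := by
      rw [Real.sqrt_eq_rpow, Complex.ofReal_cpow Real.pi_pos.le]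
      norm_num
    rw [h12, ← Complex.cpow_nat_mul]
    congr 1
    ring
  rw [h3, Complex.cpow_sub _ _ hπ, Complex.cpow_one]
  field_simp
end

section
/- Let $a, n$ be positive integers and let $s$ be a complex number with $\Re(s) > 1$. Then $\delta_{a|n}\sum_{\ell\geq1}\frac{c_\ell(n/a)}{\ell^s} = \frac{1}{a}\sum_{\ell\geq1}\frac{c_\ell(n)}{\ell^s}(\ell,a)^s$, where $\delta_{a|n}=1$ if $a\mid n$ and $0$ otherwise. -/
open Finset Complex ArithmeticFunction
open scoped ArithmeticFunction.Moebius

/-- The Ramanujan sum `c_ℓ(m) = ∑_{h mod ℓ, (h,ℓ)=1} e^{2πi h m / ℓ}`. -/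
noncomputable def ramanujanSum (ℓ : ℕ) (m : ℤ) : ℂ :=
  ∑ h ∈ (Finset.range ℓ).filter (fun h => Nat.Coprime h ℓ),
    Complex.exp (2 * Real.pi * Complex.I * h * m / ℓ)

lemma summable_rpow {t : ℝ} (ht : 1 < t) : Summable (fun j : ℕ => (j:ℝ) ^ (-t)) :=
  Real.summable_nat_rpow.mpr (by linarith)

lemma norm_natCast_cpow (j : ℕ) (hj : 0 < j) (s : ℂ) :
    ‖((j:ℕ):ℂ) ^ s‖ = (j:ℝ) ^ s.re := by
  rw [show ((j:ℕ):ℂ) = ((j:ℝ):ℂ) by push_cast; ring,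
    Complex.norm_cpow_eq_rpow_re_of_pos (by exact_mod_cast hj)]

lemma norm_moebius_le_one (e : ℕ) : ‖((μ e : ℤ):ℂ)‖ ≤ 1 := by
  rw [Complex.norm_intCast]
  exact_mod_cast ArithmeticFunction.abs_moebius_le_one

lemma nat_mul_cpow (x y : ℕ) (s : ℂ) : ((x*y : ℕ):ℂ)^s = (x:ℂ)^s * (y:ℂ)^s := by
  rw [Nat.cast_mul, show ((x:ℕ):ℂ) = ((x:ℝ):ℂ) from (Complex.ofReal_natCast x).symm,
    show ((y:ℕ):ℂ) = ((y:ℝ):ℂ) from (Complex.ofReal_natCast y).symm,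
    ← Complex.mul_cpow_ofReal_nonneg (Nat.cast_nonneg x) (Nat.cast_nonneg y)]

lemma full_sum (j k : ℕ) (hj : 0 < j) :
    ∑ h ∈ range j, Complex.exp (2*Real.pi*I*h*k/j) = if j ∣ k then (j:ℂ) else 0 := by
  have hj0 : (j:ℂ) ≠ 0 := Nat.cast_ne_zero.mpr hj.ne'
  have hterm : ∀ h:ℕ, Complex.exp (2*Real.pi*I*h*k/j) = Complex.exp (2*Real.pi*I*k/j) ^ h := by
    intro h
    rw [← Complex.exp_nat_mul]
    congr 1
    ring
  simp_rw [hterm]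
  by_cases hd : j ∣ k
  · obtain ⟨c, rfl⟩ := hd
    have h1 : Complex.exp (2*Real.pi*I*(↑(j*c))/j) = 1 := by
      have he : (2*Real.pi*I*(↑(j*c))/j : ℂ) = (c:ℤ) * (2*Real.pi*I) := by
        push_cast
        field_simp
      rw [he, Complex.exp_int_mul_two_pi_mul_I]
    rw [if_pos (dvd_mul_right j c), h1]
    simp
  · rw [if_neg hd]
    have h2 : (2*(Real.pi:ℂ)*I) ≠ 0 := by
      simp [Real.pi_ne_zero, Complex.I_ne_zero, Complex.ofReal_ne_zero]
    have hz1 : Complex.exp (2*Real.pi*I*k/j) ≠ 1 := by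
      intro hz
      obtain ⟨t, ht⟩ := Complex.exp_eq_one_iff.mp hz
      rw [div_eq_iff hj0] at ht
      have hk : (2*(Real.pi:ℂ)*I) * k = (2*(Real.pi:ℂ)*I) * (t*j) := by
        linear_combination ht
      have hk2 : (k:ℂ) = (t:ℂ)*j := mul_left_cancel₀ h2 hk
      have hk3 : (k:ℤ) = t*j := by exact_mod_cast hk2
      exact hd (Int.natCast_dvd_natCast.mp ⟨t, by linarith⟩)
    have hzj : Complex.exp (2*Real.pi*I*k/j) ^ j = 1 := by
      rw [← Complex.exp_nat_mul]
      have he : (j:ℂ) * (2*Real.pi*I*k/j) = (k:ℤ)*(2*Real.pi*I) := by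
        push_cast
        field_simp
      rw [he, Complex.exp_int_mul_two_pi_mul_I]
    rw [geom_sum_eq hz1, hzj]
    simp

lemma sum_ramanujan_divisors (j : ℕ) (k : ℕ) (hj : 0 < j) :
    ∑ d ∈ j.divisors, ramanujanSum d (k:ℤ) = ∑ h ∈ range j, Complex.exp (2*Real.pi*I*h*k/j) := by
  unfold ramanujanSum
  rw [Finset.sum_sigma']
  refine Finset.sum_bij' (fun p _ => p.2 * (j / p.1))
    (fun h _ => ⟨j / Nat.gcd h j, h / Nat.gcd h j⟩) ?_ ?_ ?_ ?_ ?_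
  · rintro ⟨d, h'⟩ hp
    simp only [Finset.mem_sigma, Nat.mem_divisors, Finset.mem_filter, Finset.mem_range] at hp
    obtain ⟨⟨hdvd, -⟩, hlt, -⟩ := hp
    have hd0 : 0 < d := Nat.pos_of_ne_zero (by rintro rfl; simp at hlt)
    have hjd : 0 < j / d := Nat.div_pos (Nat.le_of_dvd hj hdvd) hd0
    rw [Finset.mem_range]
    calc h' * (j / d) < d * (j / d) := (Nat.mul_lt_mul_right hjd).mpr hlt
    _ = j := Nat.mul_div_cancel' hdvd
  · intro h hh
    rw [Finset.mem_range] at hh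
    have hg : 0 < Nat.gcd h j := Nat.gcd_pos_of_pos_right h hj
    simp only [Finset.mem_sigma, Nat.mem_divisors, Finset.mem_filter, Finset.mem_range]
    exact ⟨⟨Nat.div_dvd_of_dvd (Nat.gcd_dvd_right h j), hj.ne'⟩,
      Nat.div_lt_div_of_lt_of_dvd (Nat.gcd_dvd_right h j) hh,
      Nat.coprime_div_gcd_div_gcd hg⟩
  · rintro ⟨d, h'⟩ hp
    simp only [Finset.mem_sigma, Nat.mem_divisors, Finset.mem_filter, Finset.mem_range] at hp
    obtain ⟨⟨hdvd, -⟩, hlt, hcop⟩ := hp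
    have hd0 : 0 < d := Nat.pos_of_ne_zero (by rintro rfl; simp at hlt)
    have hjd : 0 < j / d := Nat.div_pos (Nat.le_of_dvd hj hdvd) hd0
    have hgcd : Nat.gcd (h' * (j / d)) (d * (j / d)) = j / d := by
      rw [Nat.gcd_mul_right, Nat.Coprime.gcd_eq_one hcop, one_mul]
    rw [Nat.mul_div_cancel' hdvd] at hgcd
    have h1 : j / Nat.gcd (h' * (j / d)) j = d := by
      rw [hgcd, Nat.div_div_self hdvd hj.ne']
    have h2 : h' * (j / d) / Nat.gcd (h' * (j / d)) j = h' := by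
      rw [hgcd, Nat.mul_div_cancel _ hjd]
    exact Sigma.ext h1 (heq_of_eq h2)
  · intro h hh
    rw [Finset.mem_range] at hh
    have hg : 0 < Nat.gcd h j := Nat.gcd_pos_of_pos_right h hj
    have : h / Nat.gcd h j * (j / (j / Nat.gcd h j)) = h := by
      rw [Nat.div_div_self (Nat.gcd_dvd_right h j) hj.ne',
        Nat.div_mul_cancel (Nat.gcd_dvd_left h j)]
    exact this
  · rintro ⟨d, h'⟩ hp
    simp only [Finset.mem_sigma, Nat.mem_divisors, Finset.mem_filter, Finset.mem_range] at hp
    obtain ⟨⟨hdvd, -⟩, hlt, -⟩ := hp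
    have hd0 : (d:ℂ) ≠ 0 := Nat.cast_ne_zero.mpr (by rintro rfl; simp at hlt)
    have hj0 : (j:ℂ) ≠ 0 := Nat.cast_ne_zero.mpr hj.ne'
    have hjd : ((j/d : ℕ):ℂ) * d = j := by rw [← Nat.cast_mul, Nat.div_mul_cancel hdvd]
    congr 1
    push_cast
    field_simp
    rw [← hjd]
    ring

lemma ramanujan_moebius (k j : ℕ) (hk : 0 < k) :
    ramanujanSum j (k:ℤ) = ∑ d ∈ k.divisors, (if d ∣ j then (d:ℂ) * ((μ (j/d) : ℤ):ℂ) else 0) := by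
  rcases Nat.eq_zero_or_pos j with rfl | hj
  · simp [ramanujanSum]
  · have key := (ArithmeticFunction.sum_eq_iff_sum_smul_moebius_eq
      (f := fun d => ramanujanSum d (k:ℤ))
      (g := fun n => if n ∣ k then (n:ℂ) else 0)).mp
      (fun n hn => by rw [sum_ramanujan_divisors n k hn, full_sum n k hn]) j hj
    rw [← key, Nat.sum_divisorsAntidiagonal' (f := fun x y => (μ x : ℤ) • (if y ∣ k then (y:ℂ) else 0))]
    simp_rw [smul_ite, smul_zero, zsmul_eq_mul]
    rw [← Finset.sum_filter, ← Finset.sum_filter]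
    have hset : j.divisors.filter (· ∣ k) = k.divisors.filter (· ∣ j) := by
      ext d
      simp only [Finset.mem_filter, Nat.mem_divisors]
      constructor
      · rintro ⟨⟨h1, -⟩, h2⟩; exact ⟨⟨h2, hk.ne'⟩, h1⟩
      · rintro ⟨⟨h1, -⟩, h2⟩; exact ⟨⟨h2, hj.ne'⟩, h1⟩
    rw [hset]
    exact Finset.sum_congr rfl (fun d _ => by ring)

lemma tsum_ramanujan (k : ℕ) (hk : 0 < k) (w : ℕ → ℂ) (B t : ℝ) (ht : 1 < t)
    (hw : ∀ j : ℕ, ‖w j‖ ≤ B * (j:ℝ)^(-t)) :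
    ∑' j : ℕ, ramanujanSum j (k:ℤ) * w j
      = ∑ d ∈ k.divisors, (d:ℂ) * ∑' e : ℕ, ((μ e : ℤ):ℂ) * w (d*e) := by
  have hterm : ∀ j : ℕ, ramanujanSum j (k:ℤ) * w j
      = ∑ d ∈ k.divisors, (if d ∣ j then (d:ℂ) * ((μ (j/d) : ℤ):ℂ) else 0) * w j := by
    intro j
    rw [ramanujan_moebius k j hk, Finset.sum_mul]
  rw [tsum_congr hterm, Summable.tsum_finsetSum (fun d _ => ?_)]
  · refine Finset.sum_congr rfl (fun d hd => ?_)
    have hd0 : 0 < d := Nat.pos_of_mem_divisors hd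
    have hinj : Function.Injective (fun e : ℕ => d * e) :=
      fun x y h => Nat.eq_of_mul_eq_mul_left hd0 h
    have hsupp : Function.support
        (fun j => (if d ∣ j then (d:ℂ) * ((μ (j/d) : ℤ):ℂ) else 0) * w j)
        ⊆ Set.range (fun e : ℕ => d * e) := by
      intro j hj
      by_cases h : d ∣ j
      · obtain ⟨e, rfl⟩ := h; exact ⟨e, rfl⟩
      · simp [h] at hj
    rw [← Function.Injective.tsum_eq hinj hsupp]
    have : ∀ e : ℕ, (if d ∣ d*e then (d:ℂ) * ((μ (d*e/d) : ℤ):ℂ) else 0) * w (d*e)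
        = (d:ℂ) * (((μ e : ℤ):ℂ) * w (d*e)) := by
      intro e
      rw [if_pos (dvd_mul_right d e), Nat.mul_div_cancel_left e hd0, mul_assoc]
    rw [tsum_congr this, tsum_mul_left]
  · refine Summable.of_norm_bounded (g := fun j => ((d:ℝ)*B) * (j:ℝ)^(-t))
      ((summable_rpow ht).mul_left _) (fun j => ?_)
    rw [norm_mul]
    have h1 : ‖(if d ∣ j then (d:ℂ) * ((μ (j/d) : ℤ):ℂ) else 0)‖ ≤ d := by
      split
      · rw [norm_mul, Complex.norm_natCast]
        calc (d:ℝ) * ‖((μ (j/d) : ℤ):ℂ)‖ ≤ (d:ℝ) * 1 :=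
          mul_le_mul_of_nonneg_left (norm_moebius_le_one _) (Nat.cast_nonneg d)
        _ = d := mul_one _
      · simp
    calc ‖(if d ∣ j then (d:ℂ) * ((μ (j/d) : ℤ):ℂ) else 0)‖ * ‖w j‖
        ≤ (d:ℝ) * (B * (j:ℝ)^(-t)) :=
          mul_le_mul h1 (hw j) (norm_nonneg _) (Nat.cast_nonneg d)
      _ = ((d:ℝ)*B) * (j:ℝ)^(-t) := by ring

def invo (p : ℕ) (e : ℕ) : ℕ := if p^2 ∣ e then e else if p ∣ e then e / p else e * p

lemma invo_involutive {p : ℕ} (hp : p.Prime) : Function.Involutive (invo p) := by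
  intro e
  by_cases h2 : p^2 ∣ e
  · simp [invo, h2]
  by_cases h1 : p ∣ e
  · have he0 : e ≠ 0 := by rintro rfl; exact h2 (dvd_zero _)
    have hnd : ¬ p ∣ e / p := by
      intro hc
      obtain ⟨c, hc'⟩ := hc
      obtain ⟨b, rfl⟩ := h1
      rw [Nat.mul_div_cancel_left b hp.pos] at hc'
      exact h2 (by rw [hc']; ring_nf; exact Dvd.intro c rfl)
    have hnd2 : ¬ p^2 ∣ e / p := fun hc => hnd (dvd_trans (dvd_pow_self p two_ne_zero) hc)
    simp only [invo, if_neg h2, if_pos h1, if_neg hnd2, if_neg hnd]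
    exact Nat.div_mul_cancel h1
  · have hnd2 : ¬ p^2 ∣ e * p := by
      intro hc
      obtain ⟨c, hc'⟩ := hc
      apply h1
      have h3 : e * p = (p * c) * p := by rw [hc']; ring
      exact ⟨c, Nat.eq_of_mul_eq_mul_right hp.pos h3⟩
    simp only [invo, if_neg h2, if_neg h1, if_neg hnd2, if_pos (dvd_mul_left p e)]
    exact Nat.mul_div_cancel e hp.pos

lemma gcd_mul_p {a d p : ℕ} (ha : 0 < a) (hd : 0 < d) (hp : p.Prime)
    (hlt : d.factorization p < a.factorization p)
    (e : ℕ) (he : 0 < e) (hpe : ¬ p ∣ e) :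
    Nat.gcd (d*(e*p)) a = p * Nat.gcd (d*e) a := by
  have hde : d * e ≠ 0 := by positivity
  have hdep : d * (e * p) ≠ 0 := by have := hp.pos; positivity
  have hg0 : Nat.gcd (d*e) a ≠ 0 := (Nat.gcd_pos_of_pos_right _ ha).ne'
  apply Nat.eq_of_factorization_eq (Nat.gcd_pos_of_pos_right _ ha).ne'
    (mul_pos hp.pos (Nat.gcd_pos_of_pos_right _ ha)).ne'
  intro q
  rw [Nat.factorization_gcd hdep ha.ne', Nat.factorization_mul hp.pos.ne' hg0,
    Nat.factorization_gcd hde ha.ne',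
    Nat.factorization_mul hd.ne' (mul_ne_zero he.ne' hp.pos.ne'),
    Nat.factorization_mul he.ne' hp.pos.ne',
    Nat.factorization_mul hd.ne' he.ne', hp.factorization]
  simp only [Finsupp.inf_apply, Finsupp.add_apply, Finsupp.coe_add, Pi.add_apply]
  rcases eq_or_ne q p with rfl | hqp
  · rw [Finsupp.single_eq_same, Nat.factorization_eq_zero_of_not_dvd hpe]
    omega
  · rw [Finsupp.single_eq_of_ne' (Ne.symm hqp)]
    omega

lemma moebius_eq_zero_of_sq_dvd {p e : ℕ} (hp : p.Prime) (h2 : p^2 ∣ e) : μ e = 0 := by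
  rcases Nat.eq_zero_or_pos e with rfl | he
  · simp
  · refine ArithmeticFunction.moebius_eq_zero_of_not_squarefree (fun hsq => hp.not_isUnit ?_)
    exact hsq p (by rwa [← pow_two])

lemma key_vanish (s : ℂ) (a d : ℕ) (ha : 0 < a) (hd : 0 < d) (hnd : ¬ a ∣ d) :
    ∑' e : ℕ, ((μ e : ℤ):ℂ) * ((Nat.gcd (d*e) a : ℂ)^s / ((d*e : ℕ):ℂ)^s) = 0 := by
  obtain ⟨p, hp, hlt⟩ : ∃ p, p.Prime ∧ d.factorization p < a.factorization p := by
    have hle : ¬ a.factorization ≤ d.factorization :=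
      fun h => hnd ((Nat.factorization_le_iff_dvd ha.ne' hd.ne').mp h)
    have : ∃ p, ¬ a.factorization p ≤ d.factorization p := by
      by_contra h
      push_neg at h
      exact hle (Finsupp.le_def.mpr h)
    obtain ⟨p, hp⟩ := this
    have hpp : p.Prime := by
      by_contra hnp
      exact hp (by rw [Nat.factorization_eq_zero_of_not_prime a hnp]; exact Nat.zero_le _)
    exact ⟨p, hpp, lt_of_not_ge hp⟩
  set g : ℕ → ℂ := fun e => ((μ e : ℤ):ℂ) * ((Nat.gcd (d*e) a : ℂ)^s / ((d*e : ℕ):ℂ)^s)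
    with hg_def
  have hp0 : ((p:ℕ):ℂ)^s ≠ 0 := by
    have hpne : ((p:ℕ):ℂ) ≠ 0 := Nat.cast_ne_zero.mpr hp.pos.ne'
    simp [Complex.cpow_eq_zero_iff, hpne]
  have hstep : ∀ e : ℕ, 0 < e → ¬ p ∣ e → g (e*p) = - g e := by
    intro e he hpe
    have hμ : ((μ (e*p) : ℤ):ℂ) = -((μ e : ℤ):ℂ) := by
      rw [ArithmeticFunction.IsMultiplicative.map_mul_of_coprime
        ArithmeticFunction.isMultiplicative_moebius
        ((hp.coprime_iff_not_dvd.mpr hpe).symm), ArithmeticFunction.moebius_apply_prime hp]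
      push_cast
      ring
    have hgcd := gcd_mul_p ha hd hp hlt e he hpe
    simp only [hg_def]
    rw [hμ, hgcd, nat_mul_cpow p (Nat.gcd (d*e) a) s,
      show d*(e*p) = (d*e)*p by ring, nat_mul_cpow (d*e) p s,
      mul_comm (((d*e : ℕ):ℂ)^s) (((p:ℕ):ℂ)^s), mul_div_mul_left _ _ hp0]
    ring
  have hanti : ∀ e : ℕ, g (invo p e) = - g e := by
    intro e
    by_cases h2 : p^2 ∣ e
    · have hμ0 : μ e = 0 := moebius_eq_zero_of_sq_dvd hp h2
      simp only [invo, if_pos h2, hg_def, hμ0]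
      simp
    by_cases h1 : p ∣ e
    · have he0 : e ≠ 0 := by rintro rfl; exact h2 (dvd_zero _)
      have hc : e / p * p = e := Nat.div_mul_cancel h1
      have hpc : ¬ p ∣ e / p := by
        intro hcd
        obtain ⟨c, hc'⟩ := hcd
        obtain ⟨b, rfl⟩ := h1
        rw [Nat.mul_div_cancel_left b hp.pos] at hc'
        exact h2 (by rw [hc']; ring_nf; exact Dvd.intro c rfl)
      have hcpos : 0 < e / p := Nat.pos_of_ne_zero (by
        intro h0
        rw [h0, zero_mul] at hc
        exact he0 hc.symm)
      have := hstep (e/p) hcpos hpc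
      rw [hc] at this
      simp only [invo, if_neg h2, if_pos h1]
      rw [this]
      ring
    · have he0 : e ≠ 0 := by rintro rfl; exact h2 (dvd_zero _)
      simp only [invo, if_neg h2, if_neg h1]
      exact hstep e (Nat.pos_of_ne_zero he0) h1
  have hEq := Equiv.tsum_eq
    ⟨invo p, invo p, (invo_involutive hp).leftInverse, (invo_involutive hp).rightInverse⟩ g
  simp only [Equiv.coe_fn_mk] at hEq
  rw [tsum_congr hanti, tsum_neg] at hEq
  have h2 : (∑' e, g e) + (∑' e, g e) = 0 := by linear_combination -hEq
  exact add_self_eq_zero.mp h2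


lemma tsum_shift (F : ℕ → ℂ) (h0 : F 0 = 0) : ∑' ℓ:ℕ, F (ℓ+1) = ∑' j:ℕ, F j := by
  refine Function.Injective.tsum_eq (g := fun ℓ : ℕ => ℓ+1)
    (fun x y h => by simpa using h) ?_
  intro j hj
  match j with
  | 0 => exact absurd h0 hj
  | j+1 => exact ⟨j, rfl⟩

lemma ramanujanSum_zero (m : ℤ) : ramanujanSum 0 m = 0 := by simp [ramanujanSum]

theorem ramanujan_sum_dilation (a n : ℕ) (ha : 0 < a) (hn : 0 < n) (s : ℂ)
    (hs : 1 < s.re) :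
    (if a ∣ n then ∑' ℓ : ℕ, ramanujanSum (ℓ + 1) ((n / a : ℕ) : ℤ) / ((ℓ : ℂ) + 1) ^ s
      else 0) =
    (1 / (a : ℂ)) * ∑' ℓ : ℕ,
      ramanujanSum (ℓ + 1) (n : ℤ) * ((Nat.gcd (ℓ + 1) a : ℂ) ^ s) / ((ℓ : ℂ) + 1) ^ s := by
  have hs0 : s ≠ 0 := by intro h; rw [h] at hs; norm_num at hs
  have ht0 : (0:ℝ) < s.re := by linarith
  set w1 : ℕ → ℂ := fun j => 1 / ((j:ℕ):ℂ)^s with hw1_def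
  set w2 : ℕ → ℂ := fun j => ((Nat.gcd j a : ℕ):ℂ)^s / ((j:ℕ):ℂ)^s with hw2_def
  set M : ℂ := ∑' e:ℕ, ((μ e : ℤ):ℂ) * w1 e with hM_def
  -- norm bounds
  have hb1 : ∀ j : ℕ, ‖w1 j‖ ≤ 1 * (j:ℝ)^(-s.re) := by
    intro j
    rcases Nat.eq_zero_or_pos j with rfl | hj
    · simp [hw1_def, Complex.zero_cpow hs0, Real.zero_rpow (by linarith : -s.re ≠ 0)]
    · rw [hw1_def, one_mul, norm_div, norm_one, norm_natCast_cpow j hj s,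
        Real.rpow_neg (Nat.cast_nonneg j), one_div]
  have hb2 : ∀ j : ℕ, ‖w2 j‖ ≤ ((a:ℝ)^s.re) * (j:ℝ)^(-s.re) := by
    intro j
    rcases Nat.eq_zero_or_pos j with rfl | hj
    · simp [hw2_def, Complex.zero_cpow hs0, Real.zero_rpow (by linarith : -s.re ≠ 0)]
    · rw [hw2_def, norm_div, norm_natCast_cpow j hj s,
        norm_natCast_cpow _ (Nat.gcd_pos_of_pos_right j ha) s,
        Real.rpow_neg (Nat.cast_nonneg j), div_eq_mul_inv]
      refine mul_le_mul_of_nonneg_right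
        (Real.rpow_le_rpow (Nat.cast_nonneg _) (by exact_mod_cast Nat.gcd_le_right j ha) ht0.le)
        (inv_nonneg.mpr (Real.rpow_nonneg (Nat.cast_nonneg _) _))
  -- inner tsum evaluations
  have hd_ne : ∀ d : ℕ, 0 < d → ((d:ℕ):ℂ)^s ≠ 0 := by
    intro d hd
    simp [Complex.cpow_eq_zero_iff, Nat.cast_ne_zero.mpr hd.ne']
  have inner1 : ∀ d : ℕ, ∑' e:ℕ, ((μ e : ℤ):ℂ) * w1 (d*e) = (1/((d:ℕ):ℂ)^s) * M := by
    intro d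
    rw [hM_def, ← tsum_mul_left]
    refine tsum_congr (fun e => ?_)
    simp only [hw1_def]
    rw [nat_mul_cpow]
    ring
  have inner2 : ∀ d : ℕ, a ∣ d →
      ∑' e:ℕ, ((μ e : ℤ):ℂ) * w2 (d*e) = (((a:ℕ):ℂ)^s/((d:ℕ):ℂ)^s) * M := by
    intro d had
    rw [hM_def, ← tsum_mul_left]
    refine tsum_congr (fun e => ?_)
    simp only [hw2_def, hw1_def]
    rw [Nat.gcd_eq_right (dvd_mul_of_dvd_left had e), nat_mul_cpow]
    ring
  have inner2' : ∀ d : ℕ, 0 < d → ¬ a ∣ d →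
      ∑' e:ℕ, ((μ e : ℤ):ℂ) * w2 (d*e) = 0 := by
    intro d hd hnad
    have := key_vanish s a d ha hd hnad
    rw [← this]
  -- main series rewrites
  have hL : ∑' ℓ : ℕ, ramanujanSum (ℓ + 1) ((n / a : ℕ) : ℤ) / ((ℓ : ℂ) + 1) ^ s
      = ∑' j : ℕ, ramanujanSum j ((n / a : ℕ) : ℤ) * w1 j := by
    rw [← tsum_shift (fun j => ramanujanSum j ((n / a : ℕ) : ℤ) * w1 j)
      (by simp [ramanujanSum_zero])]
    refine tsum_congr (fun ℓ => ?_)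
    show _ = ramanujanSum (ℓ+1) ((n / a : ℕ) : ℤ) * w1 (ℓ+1)
    simp only [hw1_def]
    rw [mul_one_div]
    push_cast
    rfl
  have hR : ∑' ℓ : ℕ, ramanujanSum (ℓ + 1) (n : ℤ) * ((Nat.gcd (ℓ + 1) a : ℂ) ^ s) / ((ℓ : ℂ) + 1) ^ s
      = ∑' j : ℕ, ramanujanSum j (n : ℤ) * w2 j := by
    rw [← tsum_shift (fun j => ramanujanSum j (n : ℤ) * w2 j) (by simp [ramanujanSum_zero])]
    refine tsum_congr (fun ℓ => ?_)
    show _ = ramanujanSum (ℓ+1) (n:ℤ) * w2 (ℓ+1)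
    simp only [hw2_def]
    rw [mul_div_assoc]
    push_cast
    rfl
  rw [hR, tsum_ramanujan n hn w2 ((a:ℝ)^s.re) s.re hs hb2]
  by_cases hdvd : a ∣ n
  · rw [if_pos hdvd, hL,
      tsum_ramanujan (n/a) (Nat.div_pos (Nat.le_of_dvd hn hdvd) ha) w1 1 s.re hs hb1]
    have hrw : ∀ d ∈ n.divisors, (d:ℂ) * ∑' e:ℕ, ((μ e : ℤ):ℂ) * w2 (d*e)
        = if a ∣ d then (d:ℂ) * (((a:ℕ):ℂ)^s/((d:ℕ):ℂ)^s * M) else 0 := by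
      intro d hd
      by_cases had : a ∣ d
      · rw [inner2 d had, if_pos had]
      · rw [inner2' d (Nat.pos_of_mem_divisors hd) had, if_neg had, mul_zero]
    rw [Finset.sum_congr rfl hrw, ← Finset.sum_filter, Finset.mul_sum]
    have ha0 : ((a:ℕ):ℂ) ≠ 0 := Nat.cast_ne_zero.mpr ha.ne'
    have has : ((a:ℕ):ℂ)^s ≠ 0 := hd_ne a ha
    refine Finset.sum_bij' (fun d' _ => a * d') (fun d _ => d / a) ?_ ?_ ?_ ?_ ?_
    · intro d' hd'
      rw [Nat.mem_divisors] at hd'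
      rw [Finset.mem_filter, Nat.mem_divisors]
      have h1 : a * d' ∣ n := by
        have := mul_dvd_mul_left a hd'.1
        rwa [Nat.mul_div_cancel' hdvd] at this
      exact ⟨⟨h1, hn.ne'⟩, dvd_mul_right a d'⟩
    · intro d hd
      rw [Finset.mem_filter, Nat.mem_divisors] at hd
      obtain ⟨⟨hdn, -⟩, had⟩ := hd
      rw [Nat.mem_divisors]
      constructor
      · show d / a ∣ n / a
        obtain ⟨c, rfl⟩ := had
        rw [Nat.mul_div_cancel_left c ha]
        exact (Nat.dvd_div_iff_mul_dvd hdvd).mpr hdn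
      · exact (Nat.div_pos (Nat.le_of_dvd hn hdvd) ha).ne'
    · intro d' _
      exact Nat.mul_div_cancel_left d' ha
    · intro d hd
      rw [Finset.mem_filter] at hd
      exact Nat.mul_div_cancel' hd.2
    · intro d' hd'
      have hd'0 : 0 < d' := Nat.pos_of_mem_divisors hd'
      have hds : ((d':ℕ):ℂ)^s ≠ 0 := hd_ne d' hd'0
      rw [inner1 d', nat_mul_cpow]
      push_cast
      field_simp
  · rw [if_neg hdvd]
    have hz : ∀ d ∈ n.divisors, (d:ℂ) * ∑' e:ℕ, ((μ e : ℤ):ℂ) * w2 (d*e) = 0 := by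
      intro d hd
      have hnad : ¬ a ∣ d := fun h => hdvd (h.trans (Nat.dvd_of_mem_divisors hd))
      rw [inner2' d (Nat.pos_of_mem_divisors hd) hnad, mul_zero]
    rw [Finset.sum_congr rfl hz, Finset.sum_const_zero, mul_zero]
end

section
/- Let $a, m$ be positive integers with $a \mid m$ and let $s \in \mathbb{C}$ with $\Re(s) > 1$. Then $\sigma_{1-s}(m/a) = \zeta(s)\frac{1}{a}\sum_{\ell\geq1}\frac{c_\ell(m)}{\ell^s}(\ell,a)^s$. -/
open Finset

/-- The divisor power sum `σ_α(n) = ∑_{d ∣ n} d^α` with complex exponent. -/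
noncomputable def sigmaC (α : ℂ) (n : ℕ) : ℂ := ∑ d ∈ n.divisors, (d : ℂ) ^ α

lemma sum_exp_range (N : ℕ) (hN : 0 < N) (m : ℤ) :
    ∑ j ∈ range N, Complex.exp (2 * Real.pi * Complex.I * j * m / N) =
      if (N : ℤ) ∣ m then (N : ℂ) else 0 := by
  have hNC : (N : ℂ) ≠ 0 := Nat.cast_ne_zero.mpr hN.ne'
  have h2pi : (2 * (Real.pi : ℂ) * Complex.I) ≠ 0 := by
    simp [Real.pi_ne_zero, Complex.I_ne_zero]
  have hterm : ∀ j : ℕ, Complex.exp (2 * Real.pi * Complex.I * j * m / N)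
      = Complex.exp (2 * Real.pi * Complex.I * m / N) ^ j := by
    intro j
    rw [← Complex.exp_nat_mul]
    congr 1
    ring
  simp_rw [hterm]
  by_cases h : (N : ℤ) ∣ m
  · obtain ⟨k, hk⟩ := id h
    have hω : Complex.exp (2 * Real.pi * Complex.I * m / N) = 1 := by
      have harg : (2 * Real.pi * Complex.I * m / N : ℂ) = (k : ℂ) * (2 * Real.pi * Complex.I) := by
        have hm : (m : ℂ) = (N : ℂ) * (k : ℂ) := by exact_mod_cast congrArg Int.cast hk
        field_simp [hm]
        linear_combination hm
      rw [harg, Complex.exp_int_mul_two_pi_mul_I]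
    simp only [hω, one_pow, sum_const, card_range, nsmul_eq_mul, mul_one, if_pos h]
  · have hω : Complex.exp (2 * Real.pi * Complex.I * m / N) ≠ 1 := by
      intro hc
      rw [Complex.exp_eq_one_iff] at hc
      obtain ⟨n, hn⟩ := hc
      apply h
      have hn' : 2 * (Real.pi : ℂ) * Complex.I * (m : ℂ)
          = (n : ℂ) * (2 * Real.pi * Complex.I) * (N : ℂ) := by
        have h2 := congrArg (fun z : ℂ => z * (N : ℂ)) hn
        simpa [div_mul_cancel₀, hNC] using h2
      have hmc : (m : ℂ) = (n : ℂ) * N := by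
        apply mul_left_cancel₀ h2pi
        rw [hn']
        ring
      have : m = n * N := by exact_mod_cast hmc
      exact ⟨n, by linarith⟩
    rw [geom_sum_eq hω, if_neg h]
    have hpow : Complex.exp (2 * Real.pi * Complex.I * m / N) ^ N = 1 := by
      rw [← Complex.exp_nat_mul]
      have : (N : ℂ) * (2 * Real.pi * Complex.I * m / N) = (m : ℂ) * (2 * Real.pi * Complex.I) := by
        field_simp
      rw [this, Complex.exp_int_mul_two_pi_mul_I]
    rw [hpow, sub_self, zero_div]

lemma sum_divisors_ramanujanSum (N : ℕ) (hN : 0 < N) (m : ℤ) :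
    ∑ d ∈ N.divisors, ramanujanSum d m = if (N : ℤ) ∣ m then (N : ℂ) else 0 := by
  rw [← sum_exp_range N hN m]
  simp_rw [ramanujanSum]
  rw [Finset.sum_sigma']
  refine Finset.sum_nbij' (fun x => x.2 * (N / x.1))
    (fun j => ⟨N / Nat.gcd j N, j / Nat.gcd j N⟩) ?_ ?_ ?_ ?_ ?_
  · rintro ⟨ℓ, h⟩ hx
    simp only [mem_sigma, Nat.mem_divisors, mem_filter, mem_range] at hx ⊢
    obtain ⟨⟨hℓN, hN0⟩, hhl, hcop⟩ := hx
    have hq : 0 < N / ℓ := Nat.div_pos (Nat.le_of_dvd hN hℓN) (Nat.pos_of_dvd_of_pos hℓN hN)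
    calc h * (N / ℓ) < ℓ * (N / ℓ) := by exact (Nat.mul_lt_mul_right hq).mpr hhl
    _ = N := Nat.mul_div_cancel' hℓN
  · intro j hj
    simp only [mem_range] at hj
    have hg : 0 < Nat.gcd j N := Nat.gcd_pos_of_pos_right j hN
    have hgN : Nat.gcd j N ∣ N := Nat.gcd_dvd_right j N
    simp only [mem_sigma, Nat.mem_divisors, mem_filter, mem_range]
    refine ⟨⟨Nat.div_dvd_of_dvd hgN, hN.ne'⟩, ?_, ?_⟩
    · exact Nat.div_lt_div_of_lt_of_dvd hgN hj
    · exact Nat.coprime_div_gcd_div_gcd hg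
  · rintro ⟨ℓ, h⟩ hx
    simp only [mem_sigma, Nat.mem_divisors, mem_filter, mem_range] at hx
    obtain ⟨⟨hℓN, hN0⟩, hhl, hcop⟩ := hx
    have hℓ0 : 0 < ℓ := Nat.pos_of_dvd_of_pos hℓN hN
    have hq : 0 < N / ℓ := Nat.div_pos (Nat.le_of_dvd hN hℓN) hℓ0
    set r := N / ℓ with hr
    have hNe : N = ℓ * r := (Nat.mul_div_cancel' hℓN).symm
    have hgcd : Nat.gcd (h * r) N = r := by
      rw [hNe, Nat.gcd_mul_right, hcop, one_mul]
    have h1 : N / Nat.gcd (h * r) N = ℓ := by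
      rw [hgcd, hr, Nat.div_div_self hℓN hN.ne']
    have h2 : h * r / Nat.gcd (h * r) N = h := by
      rw [hgcd, Nat.mul_div_cancel _ hq]
    simp only [h1, h2]
  · intro j hj
    simp only [mem_range] at hj
    have hg : 0 < Nat.gcd j N := Nat.gcd_pos_of_pos_right j hN
    have hgj : Nat.gcd j N ∣ j := Nat.gcd_dvd_left j N
    have hgN : Nat.gcd j N ∣ N := Nat.gcd_dvd_right j N
    simp only
    rw [Nat.div_div_self hgN hN.ne', Nat.div_mul_cancel hgj]
  · rintro ⟨ℓ, h⟩ hx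
    simp only [mem_sigma, Nat.mem_divisors, mem_filter, mem_range] at hx
    obtain ⟨⟨hℓN, hN0⟩, hhl, hcop⟩ := hx
    have hℓ0 : 0 < ℓ := Nat.pos_of_dvd_of_pos hℓN hN
    have hq : 0 < N / ℓ := Nat.div_pos (Nat.le_of_dvd hN hℓN) hℓ0
    have hℓC : (ℓ : ℂ) ≠ 0 := Nat.cast_ne_zero.mpr hℓ0.ne'
    have hqC : ((N / ℓ : ℕ) : ℂ) ≠ 0 := Nat.cast_ne_zero.mpr hq.ne'
    have hNe : (N : ℂ) = (ℓ : ℂ) * ((N / ℓ : ℕ) : ℂ) := by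
      exact_mod_cast congrArg (Nat.cast : ℕ → ℂ) (Nat.mul_div_cancel' hℓN).symm
    have hNC : (N : ℂ) ≠ 0 := Nat.cast_ne_zero.mpr hN.ne'
    congr 1
    push_cast
    rw [div_eq_div_iff hℓC hNC, hNe]
    ring

open ArithmeticFunction in
lemma norm_ramanujanSum_le (m : ℕ) (hm : 0 < m) (N : ℕ) (hN : 0 < N) :
    ‖ramanujanSum N (m : ℤ)‖ ≤ ∑ d ∈ m.divisors, (d : ℝ) := by
  have hinv : ∀ n > 0, ∑ x ∈ n.divisorsAntidiagonal,
      (moebius x.fst : ℤ) • (if ((x.snd : ℕ) : ℤ) ∣ (m : ℤ) then ((x.snd : ℕ) : ℂ) else 0)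
      = ramanujanSum n (m : ℤ) := by
    exact (sum_eq_iff_sum_smul_moebius_eq
      (f := fun n => ramanujanSum n (m : ℤ))
      (g := fun n => if ((n : ℕ) : ℤ) ∣ (m : ℤ) then ((n : ℕ) : ℂ) else 0)).mp
      (fun n hn => sum_divisors_ramanujanSum n hn (m : ℤ))
  rw [← hinv N hN]
  calc ‖∑ x ∈ N.divisorsAntidiagonal,
      (moebius x.fst : ℤ) • (if ((x.snd : ℕ) : ℤ) ∣ (m : ℤ) then ((x.snd : ℕ) : ℂ) else 0)‖
      ≤ ∑ x ∈ N.divisorsAntidiagonal,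
        ‖(moebius x.fst : ℤ) • (if ((x.snd : ℕ) : ℤ) ∣ (m : ℤ) then ((x.snd : ℕ) : ℂ) else 0)‖ :=
      norm_sum_le _ _
    _ ≤ ∑ x ∈ N.divisorsAntidiagonal, (if (x.snd : ℕ) ∣ m then ((x.snd : ℕ) : ℝ) else 0) := by
      apply Finset.sum_le_sum
      intro x hx
      rw [zsmul_eq_mul, norm_mul]
      have h1 : ‖((moebius x.fst : ℤ) : ℂ)‖ ≤ 1 := by
        rw [Complex.norm_intCast]
        exact_mod_cast abs_moebius_le_one
      have h2 : ‖(if ((x.snd : ℕ) : ℤ) ∣ (m : ℤ) then ((x.snd : ℕ) : ℂ) else 0)‖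
          = (if (x.snd : ℕ) ∣ m then ((x.snd : ℕ) : ℝ) else 0) := by
        split_ifs with h h' h'
        · simp
        · exact absurd (Int.ofNat_dvd.mp h) h'
        · exact absurd (Int.ofNat_dvd.mpr h') h
        · simp
      rw [h2]
      calc ‖((moebius x.fst : ℤ) : ℂ)‖ * (if (x.snd : ℕ) ∣ m then ((x.snd : ℕ) : ℝ) else 0)
          ≤ 1 * (if (x.snd : ℕ) ∣ m then ((x.snd : ℕ) : ℝ) else 0) := by
            apply mul_le_mul_of_nonneg_right h1
            positivity
        _ = _ := one_mul _
    _ = ∑ d ∈ N.divisors, (if d ∣ m then (d : ℝ) else 0) :=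
      Nat.sum_divisorsAntidiagonal' (f := fun _ j => if j ∣ m then (j : ℝ) else 0)
    _ ≤ ∑ d ∈ m.divisors, (d : ℝ) := by
      rw [← Finset.sum_filter]
      apply Finset.sum_le_sum_of_subset_of_nonneg
      · intro d hd
        simp only [mem_filter, Nat.mem_divisors] at hd ⊢
        exact ⟨hd.2, hm.ne'⟩
      · intro d _ _
        positivity

lemma key_dvd (ℓ a N : ℕ) (hℓ : 0 < ℓ) :
    ℓ ∣ N * a ↔ ℓ / Nat.gcd ℓ a ∣ N := by
  set g := Nat.gcd ℓ a with hg
  have hgpos : 0 < g := Nat.gcd_pos_of_pos_left a hℓ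
  have hgl : g ∣ ℓ := Nat.gcd_dvd_left ℓ a
  have hga : g ∣ a := Nat.gcd_dvd_right ℓ a
  set q := ℓ / g with hqdef
  have hq : ℓ = q * g := (Nat.div_mul_cancel hgl).symm
  have hcop : Nat.Coprime q (a / g) := Nat.coprime_div_gcd_div_gcd hgpos
  constructor
  · intro h
    have h2 : q * g ∣ N * (a / g) * g := by
      rw [← hq]
      have : N * (a / g) * g = N * a := by
        rw [mul_assoc, Nat.div_mul_cancel hga]
      rw [this]
      exact h
    have h3 : q ∣ N * (a / g) := (Nat.mul_dvd_mul_iff_right hgpos).mp h2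
    exact (Nat.Coprime.dvd_of_dvd_mul_right hcop) h3
  · intro h
    calc ℓ = q * g := hq
    _ ∣ N * g := mul_dvd_mul_right h g
    _ ∣ N * a := mul_dvd_mul_left N hga

lemma aux_div (c X Y Z : ℂ) (hX : X ≠ 0) (hY : Y ≠ 0) (hZ : Z ≠ 0) :
    1 / X * (c * Z / (Z * Y)) = c / (X * Y) := by
  field_simp

lemma cpow_natCast_ne_zero {n : ℕ} (hn : 0 < n) (s : ℂ) : ((n : ℕ) : ℂ) ^ s ≠ 0 := by
  simp [Complex.cpow_eq_zero_iff, Nat.cast_ne_zero.mpr hn.ne']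

set_option maxHeartbeats 2000000 in
theorem modified_ramanujan_identity (a m : ℕ) (ha : 0 < a) (hm : 0 < m)
    (hdvd : a ∣ m) (s : ℂ) (hs : 1 < s.re) :
    sigmaC (1 - s) (m / a) =
      riemannZeta s * ((1 / (a : ℂ)) * ∑' ℓ : ℕ,
        ramanujanSum (ℓ + 1) (m : ℤ) * ((Nat.gcd (ℓ + 1) a : ℂ) ^ s) / ((ℓ : ℂ) + 1) ^ s) := by
  have hma : 0 < m / a := Nat.div_pos (Nat.le_of_dvd hm hdvd) ha
  set C : ℝ := ∑ d ∈ m.divisors, (d : ℝ) with hC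
  have hC0 : 0 ≤ C := Finset.sum_nonneg (fun _ _ => by positivity)
  set t : ℕ → ℂ := fun ℓ =>
    ramanujanSum (ℓ + 1) (m : ℤ) * ((Nat.gcd (ℓ + 1) a : ℂ) ^ s) / ((ℓ : ℂ) + 1) ^ s with ht
  -- norms
  have hcast : ∀ ℓ : ℕ, ((ℓ : ℂ) + 1) = ((ℓ + 1 : ℕ) : ℂ) := by intro ℓ; push_cast; ring
  have hnorm : ∀ ℓ : ℕ, ‖t ℓ‖ ≤ (C * (a : ℝ) ^ s.re) * (1 / ((ℓ + 1 : ℕ) : ℝ) ^ s.re) := by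
    intro ℓ
    have hgpos : 0 < Nat.gcd (ℓ + 1) a := Nat.gcd_pos_of_pos_left a (Nat.succ_pos ℓ)
    have h1 : ‖((Nat.gcd (ℓ + 1) a : ℕ) : ℂ) ^ s‖ = ((Nat.gcd (ℓ + 1) a : ℕ) : ℝ) ^ s.re :=
      Complex.norm_natCast_cpow_of_pos hgpos s
    have h2 : ‖((ℓ : ℂ) + 1) ^ s‖ = ((ℓ + 1 : ℕ) : ℝ) ^ s.re := by
      rw [hcast ℓ]; exact Complex.norm_natCast_cpow_of_pos (Nat.succ_pos ℓ) s
    have hz : (0:ℝ) < ((ℓ + 1 : ℕ) : ℝ) ^ s.re :=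
      Real.rpow_pos_of_pos (by positivity) _
    rw [ht]
    simp only []
    rw [norm_div, norm_mul, h1, h2, mul_one_div]
    apply div_le_div₀ (by positivity) ?_ hz le_rfl
    apply mul_le_mul (norm_ramanujanSum_le m hm (ℓ+1) (Nat.succ_pos ℓ)) ?_ (by positivity) hC0
    apply Real.rpow_le_rpow (by positivity) ?_ (by linarith)
    exact_mod_cast Nat.le_of_dvd ha (Nat.gcd_dvd_right (ℓ+1) a)
  have hsum_base : Summable (fun n : ℕ => 1 / ((n + 1 : ℕ) : ℝ) ^ s.re) := by
    have h := (Real.summable_one_div_nat_rpow (p := s.re)).mpr hs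
    exact (summable_nat_add_iff 1).mpr h
  have hsum_t_norm : Summable (fun ℓ => ‖t ℓ‖) :=
    Summable.of_nonneg_of_le (fun _ => norm_nonneg _) hnorm
      (hsum_base.mul_left (C * (a : ℝ) ^ s.re))
  have hsum_k_norm : Summable (fun k : ℕ => ‖1 / ((k : ℂ) + 1) ^ s‖) := by
    apply hsum_base.congr
    intro k
    rw [norm_div, norm_one, hcast k, Complex.norm_natCast_cpow_of_pos (Nat.succ_pos k)]
  -- zeta
  have hzeta : riemannZeta s = ∑' k : ℕ, 1 / ((k : ℂ) + 1) ^ s :=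
    zeta_eq_tsum_one_div_nat_add_one_cpow hs
  have hmul : riemannZeta s * (∑' ℓ, t ℓ) = ∑' p : ℕ × ℕ, (1 / ((p.1 : ℂ) + 1) ^ s) * t p.2 := by
    rw [hzeta]
    exact tsum_mul_tsum_of_summable_norm hsum_k_norm hsum_t_norm
  have hF : Summable (fun p : ℕ × ℕ => (1 / ((p.1 : ℂ) + 1) ^ s) * t p.2) :=
    summable_mul_of_summable_norm (f := fun k : ℕ => 1 / ((k : ℂ) + 1) ^ s) (g := t)
      hsum_k_norm hsum_t_norm
  -- G
  set q : ℕ → ℕ := fun u => u / Nat.gcd u a with hq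
  have hqpos : ∀ ℓ : ℕ, 0 < q (ℓ + 1) := by
    intro ℓ
    exact Nat.div_pos (Nat.le_of_dvd (Nat.succ_pos ℓ) (Nat.gcd_dvd_left _ a))
      (Nat.gcd_pos_of_pos_left a (Nat.succ_pos ℓ))
  set G : ℕ × ℕ → ℂ := fun p =>
    ramanujanSum (p.2 + 1) (m : ℤ) / (((p.1 + 1) * q (p.2 + 1) : ℕ) : ℂ) ^ s with hG
  have hFG : ∀ p : ℕ × ℕ, (1 / ((p.1 : ℂ) + 1) ^ s) * t p.2 = G p := by
    rintro ⟨k, ℓ⟩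
    simp only [ht, hG]
    have hgpos : 0 < Nat.gcd (ℓ + 1) a := Nat.gcd_pos_of_pos_left a (Nat.succ_pos ℓ)
    have hgq : Nat.gcd (ℓ + 1) a * q (ℓ + 1) = ℓ + 1 := Nat.mul_div_cancel' (Nat.gcd_dvd_left _ a)
    have hsplit : ((ℓ : ℂ) + 1) ^ s = ((Nat.gcd (ℓ + 1) a : ℕ) : ℂ) ^ s * ((q (ℓ+1) : ℕ) : ℂ) ^ s := by
      conv_lhs => rw [hcast ℓ, ← hgq]
      rw [Nat.cast_mul]
      exact Complex.natCast_mul_natCast_cpow _ _ s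
    have hsplit2 : (((k + 1) * q (ℓ + 1) : ℕ) : ℂ) ^ s
        = (((k + 1 : ℕ)) : ℂ) ^ s * ((q (ℓ + 1) : ℕ) : ℂ) ^ s := by
      rw [Nat.cast_mul]
      exact Complex.natCast_mul_natCast_cpow _ _ s
    have h1 : (((k + 1 : ℕ)) : ℂ) ^ s ≠ 0 := cpow_natCast_ne_zero (Nat.succ_pos k) s
    have h2 : ((Nat.gcd (ℓ + 1) a : ℕ) : ℂ) ^ s ≠ 0 := cpow_natCast_ne_zero hgpos s
    have h3 : ((q (ℓ + 1) : ℕ) : ℂ) ^ s ≠ 0 := cpow_natCast_ne_zero (hqpos ℓ) s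
    rw [hcast k, hsplit, hsplit2]
    exact aux_div _ _ _ _ h1 h3 h2
  -- H and reindexing
  set H : ℕ × ℕ → ℂ := fun p =>
    if (p.2 + 1) ∣ (p.1 + 1) * a then ramanujanSum (p.2 + 1) (m : ℤ) / (((p.1 + 1 : ℕ)) : ℂ) ^ s
    else 0 with hH
  set i : ℕ × ℕ → ℕ × ℕ := fun p => ((p.1 + 1) * q (p.2 + 1) - 1, p.2) with hi
  have hipos : ∀ p : ℕ × ℕ, 0 < (p.1 + 1) * q (p.2 + 1) :=
    fun p => Nat.mul_pos (Nat.succ_pos _) (hqpos p.2)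
  have hisucc : ∀ p : ℕ × ℕ, (p.1 + 1) * q (p.2 + 1) - 1 + 1 = (p.1 + 1) * q (p.2 + 1) :=
    fun p => Nat.succ_pred_eq_of_pos (hipos p)
  have hiHG : ∀ p : ℕ × ℕ, H (i p) = G p := by
    rintro ⟨k, ℓ⟩
    simp only [hH, hi, hG]
    rw [hisucc (k, ℓ)]
    rw [if_pos]
    rw [(key_dvd (ℓ + 1) a ((k + 1) * q (ℓ + 1)) (Nat.succ_pos ℓ))]
    exact dvd_mul_left _ _
  have hi_inj : Function.Injective i := by
    rintro ⟨k, ℓ⟩ ⟨k', ℓ'⟩ hkl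
    simp only [hi, Prod.mk.injEq] at hkl
    obtain ⟨h1, h2⟩ := hkl
    subst h2
    have h3 : (k + 1) * q (ℓ + 1) = (k' + 1) * q (ℓ + 1) := by
      rw [← hisucc (k, ℓ), ← hisucc (k', ℓ)]
      simp only at h1 ⊢
      rw [h1]
    have := Nat.eq_of_mul_eq_mul_right (hqpos ℓ) h3
    simp only [Nat.succ_inj] at this
    exact Prod.ext (by simpa using this) rfl
  have hsupp : ∀ x ∉ Set.range i, H x = 0 := by
    rintro ⟨n, ℓ⟩ hx
    by_contra hne
    apply hx
    have hcond : (ℓ + 1) ∣ (n + 1) * a := by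
      by_contra hc
      exact hne (if_neg hc)
    have hqdvd : q (ℓ + 1) ∣ n + 1 := (key_dvd (ℓ + 1) a (n + 1) (Nat.succ_pos ℓ)).mp hcond
    have hdivpos : 0 < (n + 1) / q (ℓ + 1) :=
      Nat.div_pos (Nat.le_of_dvd (Nat.succ_pos n) hqdvd) (hqpos ℓ)
    refine ⟨((n + 1) / q (ℓ + 1) - 1, ℓ), ?_⟩
    simp only [hi]
    have h4 : (n + 1) / q (ℓ + 1) - 1 + 1 = (n + 1) / q (ℓ + 1) :=
      Nat.succ_pred_eq_of_pos hdivpos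
    rw [h4, Nat.div_mul_cancel hqdvd]
    simp
  have htsum_GH : ∑' p : ℕ × ℕ, G p = ∑' p : ℕ × ℕ, H p := by
    rw [← Function.Injective.tsum_eq hi_inj (Function.support_subset_iff'.mpr hsupp)]
    exact tsum_congr (fun p => (hiHG p).symm)
  have hsumG : Summable G := hF.congr hFG
  have hsumH : Summable H := by
    refine (Function.Injective.summable_iff hi_inj hsupp).mp ?_
    exact hsumG.congr (fun p => (hiHG p).symm)
  have hrow_zero : ∀ n : ℕ, ∀ ℓ ∉ Finset.range ((n + 1) * a), H (n, ℓ) = 0 := by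
    intro n ℓ hℓ
    simp only [hH]
    rw [if_neg]
    intro hdd
    apply hℓ
    rw [Finset.mem_range]
    calc ℓ < ℓ + 1 := Nat.lt_succ_self ℓ
    _ ≤ (n + 1) * a := Nat.le_of_dvd (Nat.mul_pos (Nat.succ_pos n) ha) hdd
  have hrows : ∀ n : ℕ, Summable (fun ℓ => H (n, ℓ)) :=
    fun n => summable_of_ne_finset_zero (hrow_zero n)
  have hprod : ∑' p : ℕ × ℕ, H p = ∑' n : ℕ, ∑' ℓ : ℕ, H (n, ℓ) := Summable.tsum_prod' hsumH hrows
  -- inner sum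
  have hdvd_iff : ∀ n : ℕ, ((n + 1) * a) ∣ m ↔ (n + 1) ∣ m / a := by
    intro n
    rw [Nat.dvd_div_iff_mul_dvd hdvd, mul_comm]
  have hinner : ∀ n : ℕ,
      ∑' ℓ : ℕ, H (n, ℓ)
        = if (n + 1) ∣ m / a then (((n + 1) * a : ℕ) : ℂ) / (((n + 1 : ℕ)) : ℂ) ^ s else 0 := by
    intro n
    rw [tsum_eq_sum (hrow_zero n)]
    simp only [hH]
    rw [← Finset.sum_filter]
    have hstep : ∑ ℓ ∈ (Finset.range ((n + 1) * a)).filter (fun ℓ => (ℓ + 1) ∣ (n + 1) * a),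
          ramanujanSum (ℓ + 1) (m : ℤ) / (((n + 1 : ℕ)) : ℂ) ^ s
        = ∑ d ∈ ((n + 1) * a).divisors, ramanujanSum d (m : ℤ) / (((n + 1 : ℕ)) : ℂ) ^ s := by
      refine Finset.sum_nbij' (fun ℓ => ℓ + 1) (fun d => d - 1) ?_ ?_ ?_ ?_ ?_
      · intro ℓ hℓ
        simp only [Finset.mem_filter, Finset.mem_range] at hℓ
        exact Nat.mem_divisors.mpr ⟨hℓ.2, (Nat.mul_pos (Nat.succ_pos n) ha).ne'⟩
      · intro d hd
        rw [Nat.mem_divisors] at hd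
        have hdpos : 0 < d := Nat.pos_of_dvd_of_pos hd.1 (Nat.mul_pos (Nat.succ_pos n) ha)
        have hd1 : d - 1 + 1 = d := Nat.succ_pred_eq_of_pos hdpos
        simp only [Finset.mem_filter, Finset.mem_range, hd1]
        exact ⟨lt_of_lt_of_le (Nat.pred_lt hdpos.ne') (Nat.le_of_dvd (Nat.mul_pos (Nat.succ_pos n) ha) hd.1), hd.1⟩
      · intro ℓ _; simp
      · intro d hd
        rw [Nat.mem_divisors] at hd
        exact Nat.succ_pred_eq_of_pos (Nat.pos_of_dvd_of_pos hd.1 (Nat.mul_pos (Nat.succ_pos n) ha))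
      · intro ℓ _; rfl
    rw [hstep, ← Finset.sum_div, sum_divisors_ramanujanSum _ (Nat.mul_pos (Nat.succ_pos n) ha) (m : ℤ)]
    have : (((n + 1) * a : ℕ) : ℤ) ∣ (m : ℤ) ↔ (n + 1) ∣ m / a := by
      rw [Int.natCast_dvd_natCast]; exact hdvd_iff n
    rw [if_congr this rfl rfl, apply_ite (fun z : ℂ => z / (((n + 1 : ℕ)) : ℂ) ^ s), zero_div]
  -- outer sum
  have houter_zero : ∀ n ∉ Finset.range (m / a),
      (if (n + 1) ∣ m / a then (((n + 1) * a : ℕ) : ℂ) / (((n + 1 : ℕ)) : ℂ) ^ s else 0) = 0 := by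
    intro n hn
    rw [if_neg]
    intro hdd
    apply hn
    rw [Finset.mem_range]
    calc n < n + 1 := Nat.lt_succ_self n
    _ ≤ m / a := Nat.le_of_dvd hma hdd
  have houter : ∑' n : ℕ,
      (if (n + 1) ∣ m / a then (((n + 1) * a : ℕ) : ℂ) / (((n + 1 : ℕ)) : ℂ) ^ s else 0)
      = (a : ℂ) * sigmaC (1 - s) (m / a) := by
    rw [tsum_eq_sum houter_zero, ← Finset.sum_filter]
    have hstep : ∑ n ∈ (Finset.range (m / a)).filter (fun n => (n + 1) ∣ m / a),
          (((n + 1) * a : ℕ) : ℂ) / (((n + 1 : ℕ)) : ℂ) ^ s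
        = ∑ d ∈ (m / a).divisors, ((d * a : ℕ) : ℂ) / ((d : ℕ) : ℂ) ^ s := by
      refine Finset.sum_nbij' (fun n => n + 1) (fun d => d - 1) ?_ ?_ ?_ ?_ ?_
      · intro n hn
        simp only [Finset.mem_filter, Finset.mem_range] at hn
        exact Nat.mem_divisors.mpr ⟨hn.2, hma.ne'⟩
      · intro d hd
        rw [Nat.mem_divisors] at hd
        have hdpos : 0 < d := Nat.pos_of_dvd_of_pos hd.1 hma
        have hd1 : d - 1 + 1 = d := Nat.succ_pred_eq_of_pos hdpos
        simp only [Finset.mem_filter, Finset.mem_range, hd1]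
        exact ⟨lt_of_lt_of_le (Nat.pred_lt hdpos.ne') (Nat.le_of_dvd hma hd.1), hd.1⟩
      · intro n _; simp
      · intro d hd
        rw [Nat.mem_divisors] at hd
        exact Nat.succ_pred_eq_of_pos (Nat.pos_of_dvd_of_pos hd.1 hma)
      · intro n _; rfl
    rw [hstep]
    unfold sigmaC
    rw [Finset.mul_sum]
    apply Finset.sum_congr rfl
    intro d hd
    have hdpos : 0 < d := Nat.pos_of_mem_divisors hd
    have hdC : (d : ℂ) ≠ 0 := Nat.cast_ne_zero.mpr hdpos.ne'
    rw [Complex.cpow_sub _ _ hdC, Complex.cpow_one]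
    push_cast
    field_simp
  -- assemble
  have key : riemannZeta s * (∑' ℓ, t ℓ) = (a : ℂ) * sigmaC (1 - s) (m / a) := by
    rw [hmul, tsum_congr hFG, htsum_GH, hprod, tsum_congr hinner, houter]
  have haC : (a : ℂ) ≠ 0 := Nat.cast_ne_zero.mpr ha.ne'
  calc sigmaC (1 - s) (m / a) = (a : ℂ) * sigmaC (1 - s) (m / a) / a := by
        field_simp
    _ = riemannZeta s * (∑' ℓ, t ℓ) / a := by rw [key]
    _ = riemannZeta s * ((1 / (a : ℂ)) * ∑' ℓ, t ℓ) := by ring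
end

section
/- For $\Re(s) > 1$, $\sum_{n\geq1}\frac{d(n)^2}{n^s} = \frac{\zeta(s)^4}{\zeta(2s)}$. -/
open ArithmeticFunction
open scoped ArithmeticFunction.Moebius ArithmeticFunction.zeta ArithmeticFunction.sigma

namespace DivSqAux

lemma isSquare_prime_pow_iff {p : ℕ} (hp : p.Prime) (j : ℕ) :
    IsSquare (p ^ j) ↔ Even j := by
  constructor
  · rintro ⟨a, ha⟩
    obtain ⟨i, hi, rfl⟩ := (Nat.dvd_prime_pow hp).mp (Dvd.intro a ha.symm)
    rw [← pow_add] at ha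
    exact (Nat.pow_right_injective hp.two_le ha) ▸ ⟨i, rfl⟩
  · rintro ⟨i, rfl⟩
    exact ⟨p ^ i, by ring⟩

lemma isSquare_of_coprime_mul {m n : ℕ} (h : m.Coprime n) (hsq : IsSquare (m * n)) :
    IsSquare m := by
  obtain ⟨c, hc⟩ := hsq
  have hu : IsUnit (GCDMonoid.gcd m n) := by rw [Nat.isUnit_iff]; exact h
  obtain ⟨d, hd⟩ := exists_eq_pow_of_mul_eq_pow hu (k := 2) (by rw [hc]; ring)
  exact ⟨d, by rw [hd]; ring⟩

/-- The arithmetic function supported on squares, `g (m^2) = μ m`. -/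
noncomputable def g : ArithmeticFunction ℂ :=
  ⟨fun n => if IsSquare n then (μ n.sqrt : ℂ) else 0, by simp⟩

lemma g_apply (n : ℕ) : g n = if IsSquare n then (μ n.sqrt : ℂ) else 0 := rfl

lemma g_sq (m : ℕ) : g (m ^ 2) = (μ m : ℂ) := by
  rw [g_apply, if_pos ⟨m, sq m⟩, Nat.sqrt_eq']

lemma g_mult : g.IsMultiplicative := by
  refine ⟨by simpa using g_sq 1, @fun m n h => ?_⟩
  by_cases hm : IsSquare m
  · by_cases hn : IsSquare n
    · obtain ⟨a, rfl⟩ := hm.exists_sq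
      obtain ⟨b, rfl⟩ := hn.exists_sq
      have hab : a.Coprime b := Nat.Coprime.coprime_dvd_right (dvd_pow_self b two_ne_zero)
        (Nat.Coprime.coprime_dvd_left (dvd_pow_self a two_ne_zero) h)
      rw [← mul_pow, g_sq, g_sq, g_sq, isMultiplicative_moebius.map_mul_of_coprime hab]
      push_cast
      ring
    · rw [g_apply, if_neg (fun hsq => hn (isSquare_of_coprime_mul h.symm (mul_comm m n ▸ hsq))),
        g_apply n, if_neg hn, mul_zero]
  · rw [g_apply, if_neg (fun hsq => hm (isSquare_of_coprime_mul h hsq)),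
      g_apply m, if_neg hm, zero_mul]

lemma g_prime_pow {p : ℕ} (hp : p.Prime) (j : ℕ) :
    g (p ^ j) = if j = 0 then 1 else if j = 2 then -1 else 0 := by
  rcases Nat.even_or_odd j with he | ho
  · obtain ⟨i, rfl⟩ := he
    rw [show p ^ (i + i) = (p ^ i) ^ 2 by ring, g_sq]
    rcases Nat.lt_or_ge i 2 with hi | hi
    · interval_cases i <;> simp [hp, moebius_apply_prime]
    · rw [moebius_eq_zero_of_not_squarefree]
      · have h2 : ¬ (i + i = 2) := by omega
        have h0 : ¬ (i + i = 0) := by omega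
        simp [h0, h2]
        omega
      · intro hsf
        have hd : p * p ∣ p ^ i :=
          dvd_trans (by rw [← sq]) (pow_dvd_pow p hi)
        exact hp.ne_one (Nat.isUnit_iff.mp (hsf p hd))
  · have h0 : ¬ (j = 0) := by rintro rfl; simp [Nat.odd_iff] at ho
    have h2 : ¬ (j = 2) := by rintro rfl; simp [Nat.odd_iff] at ho
    rw [g_apply, if_neg (fun hsq =>
      (Nat.not_odd_iff_even.mpr ((isSquare_prime_pow_iff hp j).mp hsq)) ho)]
    simp [h0, h2]

end DivSqAux

namespace DivSqAux

open Finset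

noncomputable def zc : ArithmeticFunction ℂ := ↑(ζ : ArithmeticFunction ℕ)

noncomputable def t4 : ArithmeticFunction ℂ := zc * zc * zc * zc

noncomputable def d2 : ArithmeticFunction ℂ :=
  (↑(σ 0) : ArithmeticFunction ℂ).pmul ↑(σ 0)

lemma zc_mult : zc.IsMultiplicative := isMultiplicative_zeta.natCast

lemma t4_mult : t4.IsMultiplicative := ((zc_mult.mul zc_mult).mul zc_mult).mul zc_mult

lemma d2_mult : d2.IsMultiplicative :=
  (isMultiplicative_sigma.natCast).pmul (isMultiplicative_sigma.natCast)

lemma zc_apply_pp {p : ℕ} (hp : p.Prime) (k : ℕ) : zc (p ^ k) = 1 := by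
  simp [zc, ArithmeticFunction.natCoe_apply, ArithmeticFunction.zeta_apply,
    pow_eq_zero_iff, hp.ne_zero]

lemma mul_apply_pp (f g : ArithmeticFunction ℂ) {p : ℕ} (hp : p.Prime) (e : ℕ) :
    (f * g) (p ^ e) = ∑ i ∈ range (e + 1), f (p ^ i) * g (p ^ (e - i)) := by
  rw [ArithmeticFunction.mul_apply, Nat.sum_divisorsAntidiagonal (f · * g ·),
    Nat.sum_divisors_prime_pow hp]
  refine Finset.sum_congr rfl fun i hi => ?_
  have hie : i ≤ e := by have := Finset.mem_range.mp hi; omega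
  rw [Nat.pow_div hie hp.pos]

end DivSqAux

namespace DivSqAux

open Finset

lemma t2_apply_pp {p : ℕ} (hp : p.Prime) (e : ℕ) :
    (zc * zc) (p ^ e) = (e + 1 : ℂ) := by
  rw [mul_apply_pp _ _ hp]
  simp only [zc_apply_pp hp, mul_one]
  simp

lemma t3_apply_pp {p : ℕ} (hp : p.Prime) (e : ℕ) :
    (zc * zc * zc) (p ^ e) = ((e + 1) * (e + 2) : ℂ) / 2 := by
  rw [mul_apply_pp _ _ hp]
  simp only [t2_apply_pp hp, zc_apply_pp hp, mul_one]
  induction e with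
  | zero => norm_num
  | succ n ih =>
    rw [Finset.sum_range_succ, ih]
    push_cast
    ring

lemma t4_apply_pp {p : ℕ} (hp : p.Prime) (e : ℕ) :
    t4 (p ^ e) = ((e + 1) * (e + 2) * (e + 3) : ℂ) / 6 := by
  rw [t4, mul_apply_pp _ _ hp]
  simp only [t3_apply_pp hp, zc_apply_pp hp, mul_one]
  induction e with
  | zero => norm_num
  | succ n ih =>
    rw [Finset.sum_range_succ, ih]
    push_cast
    ring

lemma d2_apply_pp {p : ℕ} (hp : p.Prime) (e : ℕ) :
    d2 (p ^ e) = ((e + 1 : ℂ)) ^ 2 := by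
  rw [d2, ArithmeticFunction.pmul_apply, ArithmeticFunction.natCoe_apply,
    ArithmeticFunction.sigma_zero_apply, Nat.divisors_prime_pow hp]
  simp [sq]

lemma key : d2 = t4 * g := by
  refine (ArithmeticFunction.IsMultiplicative.eq_iff_eq_on_prime_powers _ d2_mult _
    (t4_mult.mul g_mult)).mpr fun p e hp => ?_
  rw [d2_apply_pp hp, mul_apply_pp _ _ hp]
  have hterm : ∀ i ∈ range (e + 1), t4 (p ^ i) * g (p ^ (e - i)) =
      t4 (p ^ i) * (if e - i = 0 then 1 else if e - i = 2 then -1 else 0) := by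
    intro i _
    rw [g_prime_pow hp]
  rw [Finset.sum_congr rfl hterm]
  match e with
  | 0 => norm_num [t4_apply_pp hp]
  | 1 =>
    have h1 : t4 p = 4 := by
      have := t4_apply_pp hp 1
      rw [pow_one] at this
      rw [this]; norm_num
    rw [Finset.sum_range_succ, Finset.sum_range_one]
    norm_num [t4_apply_pp hp, h1]
  | (m+2) =>
    have hsub : ({m, m + 2} : Finset ℕ) ⊆ range (m + 2 + 1) := by
      intro x hx
      simp only [Finset.mem_insert, Finset.mem_singleton] at hx
      rcases hx with rfl | rfl <;> simp [Finset.mem_range] <;> omega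
    rw [← Finset.sum_subset hsub (fun x hx hnx => ?_)]
    · rw [Finset.sum_pair (by omega : m ≠ m + 2)]
      have h1 : m + 2 - m = 2 := by omega
      have h2 : m + 2 - (m + 2) = 0 := by omega
      rw [h1, h2]
      norm_num [t4_apply_pp hp]
      push_cast
      ring
    · simp only [Finset.mem_insert, Finset.mem_singleton] at hnx
      have hxr := Finset.mem_range.mp hx
      have : ¬ (m + 2 - x = 0) ∧ ¬ (m + 2 - x = 2) := by
        constructor <;> intro h <;> [exact hnx (Or.inr (by omega)); exact hnx (Or.inl (by omega))]
      rw [if_neg this.1, if_neg this.2, mul_zero]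

end DivSqAux

namespace DivSqAux

open LSeries

lemma hz {s : ℂ} (hs : 1 < s.re) : LSeriesSummable (fun n => zc n) s := by
  have := (LSeriesSummable_zeta_iff (s := s)).mpr hs
  convert this using 2
  exact ArithmeticFunction.natCoe_apply

lemma L_zc {s : ℂ} (hs : 1 < s.re) : LSeries (fun n => zc n) s = riemannZeta s := by
  rw [← LSeries_zeta_eq_riemannZeta hs]
  congr 1

lemma hg_summable {s : ℂ} (hs : 1 < s.re) : LSeriesSummable (fun n => g n) s := by
  refine LSeriesSummable_of_bounded_of_one_lt_re (m := 1) (fun n _ => ?_) hs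
  rw [g_apply]
  split
  · rw [Complex.norm_intCast]
    exact_mod_cast abs_moebius_le_one
  · simp

lemma L_t4 {s : ℂ} (hs : 1 < s.re) :
    LSeries (fun n => t4 n) s = riemannZeta s ^ 4 := by
  have h1 := hz hs
  have h2 : LSeriesSummable (fun n => (zc * zc) n) s := LSeriesSummable_mul h1 h1
  have h3 : LSeriesSummable (fun n => (zc * zc * zc) n) s := LSeriesSummable_mul h2 h1
  rw [t4]
  rw [LSeries_mul' h3 h1, LSeries_mul' h2 h1, LSeries_mul' h1 h1, L_zc hs]
  ring

end DivSqAux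

namespace DivSqAux

lemma term_g_sq {s : ℂ} (m : ℕ) (hm : m ≠ 0) :
    LSeries.term (fun n => g n) s (m ^ 2) = LSeries.term (fun n => (μ n : ℂ)) (2 * s) m := by
  rw [LSeries.term_of_ne_zero (pow_ne_zero 2 hm), LSeries.term_of_ne_zero hm, g_sq]
  congr 1
  rw [show ((m ^ 2 : ℕ) : ℂ) = (m : ℂ) * (m : ℂ) by push_cast; ring,
    Complex.natCast_mul_natCast_cpow,
    show (2 : ℂ) * s = ((2 : ℕ) : ℂ) * s by norm_num, Complex.cpow_nat_mul]
  ring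

lemma L_g {s : ℂ} (hs : 1 < s.re) :
    LSeries (fun n => g n) s = (riemannZeta (2 * s))⁻¹ := by
  have hs2 : 1 < (2 * s).re := by
    have : (2 * s).re = 2 * s.re := by simp [Complex.mul_re]
    rw [this]; linarith
  have hmul := LSeries_zeta_mul_Lseries_moebius hs2
  rw [LSeries_zeta_eq_riemannZeta hs2] at hmul
  have hmu : LSeries (fun n => (μ n : ℂ)) (2 * s) = (riemannZeta (2 * s))⁻¹ :=
    (inv_eq_of_mul_eq_one_right hmul).symm
  rw [← hmu, LSeries, LSeries]
  refine tsum_eq_tsum_of_ne_zero_bij (fun x => (x : ℕ) ^ 2) ?_ ?_ ?_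
  · intro a b h
    exact Subtype.ext (Nat.pow_left_injective two_ne_zero h)
  · intro n hn
    have hn0 : n ≠ 0 := by rintro rfl; simp [LSeries.term_zero] at hn
    have hgn : g n ≠ 0 := by
      intro h
      apply hn
      rw [Function.mem_support] at *
      rw [LSeries.term_of_ne_zero hn0, h, zero_div]
    have hsq : IsSquare n := by
      by_contra h
      exact hgn (by rw [g_apply, if_neg h])
    obtain ⟨m, rfl⟩ := hsq.exists_sq
    have hmu_ne : (μ m : ℂ) ≠ 0 := fun h => hgn (by rw [g_sq, h])
    have hm0 : m ≠ 0 := by rintro rfl; simp at hn0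
    refine ⟨⟨m, ?_⟩, rfl⟩
    rw [Function.mem_support, LSeries.term_of_ne_zero hm0]
    refine div_ne_zero hmu_ne fun h => ?_
    exact hm0 (by exact_mod_cast ((Complex.cpow_eq_zero_iff _ _).mp h).1)
  · intro x
    exact term_g_sq x (by
      intro h
      have := x.2
      rw [Function.mem_support, h, LSeries.term_zero] at this
      exact this rfl)

end DivSqAux

namespace DivSqAux

lemma term_d2 (s : ℂ) (n : ℕ) :
    LSeries.term (fun k => d2 k) s (n + 1) =
      (((n + 1 : ℕ).divisors.card : ℂ)) ^ 2 / ((n : ℂ) + 1) ^ s := by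
  rw [LSeries.term_of_ne_zero (Nat.succ_ne_zero n)]
  congr 1
  · rw [d2, ArithmeticFunction.pmul_apply, ArithmeticFunction.natCoe_apply,
      ArithmeticFunction.sigma_zero_apply, sq]
  · push_cast
    ring_nf

end DivSqAux

open DivSqAux

theorem divisor_squared_dirichlet_series (s : ℂ) (hs : 1 < s.re) :
    ∑' n : ℕ, (((n + 1 : ℕ).divisors.card : ℂ)) ^ 2 / ((n : ℂ) + 1) ^ s =
      riemannZeta s ^ 4 / riemannZeta (2 * s) := by
  have h1 := hz hs
  have h2 : LSeriesSummable (fun n => (zc * zc) n) s := LSeriesSummable_mul h1 h1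
  have h3 : LSeriesSummable (fun n => (zc * zc * zc) n) s := LSeriesSummable_mul h2 h1
  have h4 : LSeriesSummable (fun n => t4 n) s := LSeriesSummable_mul h3 h1
  have hL : LSeries (fun n => d2 n) s = riemannZeta s ^ 4 / riemannZeta (2 * s) := by
    rw [key, LSeries_mul' h4 (hg_summable hs), L_t4 hs, L_g hs, div_eq_mul_inv]
  rw [← hL, LSeries]
  symm
  refine tsum_eq_tsum_of_ne_zero_bij (fun x => (x : ℕ) + 1) ?_ ?_ ?_
  · intro a b h
    simp only at h
    exact Subtype.ext (by omega)
  · intro n hn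
    have hn0 : n ≠ 0 := by rintro rfl; simp [LSeries.term_zero] at hn
    have e1 : n - 1 + 1 = n := by omega
    refine ⟨⟨n - 1, ?_⟩, ?_⟩
    · simp only [Function.mem_support]
      rw [← term_d2 s (n - 1), e1]
      exact Function.mem_support.mp hn
    · show n - 1 + 1 = n
      exact e1
  · intro x
    exact term_d2 s x
end

section
/- Let $k \geq 2$ and $a_1,\dots,a_k$ be nonzero integers. Then $\sum_{\ell\geq1}\frac{\prod_{i=1}^k(a_i,\ell)}{\ell^k}\varphi(\ell) = \rho(\boldsymbol{a})\frac{\zeta(k-1)}{\zeta(k)}$ (for $k\geq3$; for $k=2$ the series diverges), where $\rho(\boldsymbol{a}) := \prod_{p\mid a_1\cdots a_k}\frac{1+\sum_{m=1}^\infty(1-1/p)p^m\prod_{i=1}^k p^{-\max(0,m-\nu_p(a_i))}}{1+(p-1)/(p^k-p)}$. -/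
open Finset

/-- Real Riemann zeta, `ζ(u) = ∑_{n ≥ 1} n^{-u}` (equal to `ζ(u)` for `u > 1`). -/
noncomputable def zetaR (u : ℝ) : ℝ := ∑' n : ℕ, 1 / ((n : ℝ) + 1) ^ u

/-- The arithmetic factor `ρ(a)` from the paper. -/
noncomputable def rho (k : ℕ) (a : Fin k → ℤ) : ℝ :=
  ∏ p ∈ (∏ i, a i).natAbs.primeFactors,
    (1 + ∑' m : ℕ, (1 - 1 / (p : ℝ)) * (p : ℝ) ^ (m + 1) *
        ∏ i, (p : ℝ) ^ (-(max 0 ((m : ℤ) + 1 - ((a i).natAbs.factorization p : ℤ))))) /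
      (1 + ((p : ℝ) - 1) / ((p : ℝ) ^ k - (p : ℝ)))

section Aux

variable {k : ℕ} {a : Fin k → ℤ}

/-- The summand of the series, as a function of `n`. -/
noncomputable def gtf (k : ℕ) (a : Fin k → ℤ) (n : ℕ) : ℝ :=
  (∏ i, (Int.gcd (a i) (n : ℤ) : ℝ)) * (Nat.totient n : ℝ) / (n : ℝ) ^ k

lemma gtf_zero : gtf k a 0 = 0 := by simp [gtf]

lemma gtf_one : gtf k a 1 = 1 := by simp [gtf]

lemma gtf_mul {m n : ℕ} (h : Nat.Coprime m n) :
    gtf k a (m * n) = gtf k a m * gtf k a n := by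
  unfold gtf
  have hg : ∀ i, (Int.gcd (a i) ((m : ℤ) * (n : ℤ)) : ℝ) =
      (Int.gcd (a i) (m : ℤ) : ℝ) * (Int.gcd (a i) (n : ℤ) : ℝ) := by
    intro i
    rw [← Nat.cast_mul]
    norm_cast
    rw [← Int.natAbs_natCast m, ← Int.natAbs_natCast n]
    simp only [Int.gcd, Int.natAbs_mul, Int.natAbs_natCast]
    exact Nat.Coprime.gcd_mul _ h
  rw [div_mul_div_comm]
  push_cast [hg, Nat.totient_mul h, prod_mul_distrib]
  ring

lemma gtf_nonneg (n : ℕ) : 0 ≤ gtf k a n := by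
  apply div_nonneg _ (by positivity)
  exact mul_nonneg (prod_nonneg fun i _ => by positivity) (by positivity)

lemma gtf_le (hk : 1 ≤ k) (ha : ∀ i, a i ≠ 0) (n : ℕ) :
    gtf k a n ≤ (∏ i, ((a i).natAbs : ℝ)) * (1 / (n : ℝ) ^ (k-1)) := by
  rcases Nat.eq_zero_or_pos n with rfl | hn
  · simp only [gtf, Nat.cast_zero]
    rw [Nat.totient_zero]
    push_cast
    simp only [mul_zero, zero_div]
    positivity
  unfold gtf
  rw [div_le_iff₀ (by positivity), mul_one_div, div_mul_eq_mul_div,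
    le_div_iff₀ (by positivity), mul_assoc]
  refine mul_le_mul (prod_le_prod (fun i _ => by positivity) (fun i _ => ?_)) ?_
    (by positivity) (prod_nonneg fun i _ => by positivity)
  · exact_mod_cast Nat.gcd_le_left _ (Int.natAbs_pos.mpr (ha i))
  · calc (Nat.totient n : ℝ) * (n:ℝ)^(k-1) ≤ (n:ℝ) * (n:ℝ)^(k-1) := by
          gcongr; exact_mod_cast Nat.totient_le n
      _ = (n:ℝ)^k := by rw [← pow_succ']; congr 1; omega

lemma gtf_summable (hk : 3 ≤ k) (ha : ∀ i, a i ≠ 0) : Summable (gtf k a) := by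
  apply Summable.of_nonneg_of_le gtf_nonneg (gtf_le (by omega) ha)
  apply Summable.mul_left
  exact Real.summable_one_div_nat_pow.mpr (by omega)

lemma gcd_prime_pow {p : ℕ} (hp : p.Prime) {x : ℕ} (hx : x ≠ 0) (e : ℕ) :
    Nat.gcd x (p^e) = p ^ min (x.factorization p) e := by
  obtain ⟨j, hj, hd⟩ := (Nat.dvd_prime_pow hp).mp (Nat.gcd_dvd_right x (p^e))
  rw [hd]
  congr 1
  have h := Nat.factorization_gcd hx (pow_ne_zero e hp.pos.ne')
  rw [hd, hp.factorization_pow] at h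
  have := congrArg (fun f => f p) h
  simpa [hp.factorization_pow, Finsupp.inf_apply] using this

lemma gtf_prime_pow {p : ℕ} (hp : p.Prime) (ha : ∀ i, a i ≠ 0) (m : ℕ) :
    gtf k a (p ^ (m+1)) = (1 - 1 / (p : ℝ)) * (p : ℝ) ^ (m + 1) *
      ∏ i, (p : ℝ) ^ (-(max 0 ((m : ℤ) + 1 - ((a i).natAbs.factorization p : ℤ)))) := by
  have hP : (0:ℝ) < (p:ℝ) := by exact_mod_cast hp.pos
  have hP0 : (p:ℝ) ≠ 0 := hP.ne'
  unfold gtf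
  have hg : ∀ i, (Int.gcd (a i) ((p ^ (m+1) : ℕ) : ℤ) : ℝ) =
      (p:ℝ) ^ ((m : ℤ) + 1) *
        (p : ℝ) ^ (-(max 0 ((m : ℤ) + 1 - ((a i).natAbs.factorization p : ℤ)))) := by
    intro i
    have : Int.gcd (a i) ((p ^ (m+1) : ℕ) : ℤ) = p ^ min ((a i).natAbs.factorization p) (m+1) := by
      simp only [Int.gcd, Int.natAbs_natCast]
      exact gcd_prime_pow hp (Int.natAbs_ne_zero.mpr (ha i)) (m+1)
    rw [this]
    push_cast
    rw [← zpow_natCast (p:ℝ), ← zpow_add₀ hP0]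
    congr 1
    push_cast
    omega
  rw [prod_congr rfl fun i _ => hg i, prod_mul_distrib, prod_const, card_univ,
    Fintype.card_fin, Nat.totient_prime_pow hp (Nat.succ_pos m)]
  push_cast [Nat.cast_sub hp.one_le]
  rw [← zpow_natCast ((p:ℝ) ^ ((m:ℤ)+1)) k, ← zpow_mul]
  have hden : ((p:ℝ) ^ (m+1)) ^ k = (p:ℝ) ^ (((m:ℤ)+1) * k) := by
    rw [← pow_mul, ← zpow_natCast (p:ℝ) ((m+1)*k)]
    norm_cast
  rw [hden, mul_comm ((p:ℝ)^(((m:ℤ)+1)*(k:ℤ))), mul_assoc, mul_div_assoc,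
    mul_div_cancel_left₀ _ (zpow_ne_zero _ hP0)]
  field_simp
  ring

/-- The local Euler factor. -/
noncomputable def lfac (k : ℕ) (a : Fin k → ℤ) (p : ℕ) : ℝ := ∑' e : ℕ, gtf k a (p ^ e)

lemma gtf_pow_summable (hk : 3 ≤ k) (ha : ∀ i, a i ≠ 0) {p : ℕ} (hp : p.Prime) :
    Summable (fun e => gtf k a (p ^ e)) :=
  (gtf_summable hk ha).comp_injective (Nat.pow_right_injective hp.two_le)

lemma lfac_eq (hk : 3 ≤ k) (ha : ∀ i, a i ≠ 0) {p : ℕ} (hp : p.Prime) :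
    lfac k a p = 1 + ∑' m : ℕ, (1 - 1 / (p : ℝ)) * (p : ℝ) ^ (m + 1) *
        ∏ i, (p : ℝ) ^ (-(max 0 ((m : ℤ) + 1 - ((a i).natAbs.factorization p : ℤ)))) := by
  rw [lfac, Summable.tsum_eq_zero_add (gtf_pow_summable hk ha hp)]
  rw [pow_zero, gtf_one]
  congr 1
  exact tsum_congr fun m => gtf_prime_pow hp ha m

lemma lfac_not_dvd (hk : 3 ≤ k) (ha : ∀ i, a i ≠ 0) {p : ℕ} (hp : p.Prime)
    (hnd : ∀ i, ¬ (p:ℤ) ∣ a i) :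
    lfac k a p = (1 - ((p:ℝ) ^ k)⁻¹) / (1 - ((p:ℝ) ^ (k-1))⁻¹) := by
  have hP : (2:ℝ) ≤ (p:ℝ) := by exact_mod_cast hp.two_le
  have hP0 : (p:ℝ) ≠ 0 := by positivity
  have hfac : ∀ i, (a i).natAbs.factorization p = 0 := by
    intro i
    apply Nat.factorization_eq_zero_of_not_dvd
    intro hd
    exact hnd i (Int.natCast_dvd.mpr hd)
  set r : ℝ := ((p:ℝ) ^ (k-1))⁻¹ with hr
  have hpk1 : (1:ℝ) < (p:ℝ) ^ (k-1) := one_lt_pow₀ (by linarith) (by omega)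
  have hr0 : 0 ≤ r := by positivity
  have hr1 : r < 1 := by
    rw [hr, inv_lt_one_iff₀]; right; exact hpk1
  have hterm : ∀ m : ℕ, gtf k a (p ^ (m+1)) = ((1 - 1/(p:ℝ)) * r) * r ^ m := by
    intro m
    rw [gtf_prime_pow hp ha m]
    have : ∀ i : Fin k, (p : ℝ) ^ (-(max 0 ((m : ℤ) + 1 - ((a i).natAbs.factorization p : ℤ))))
        = (p:ℝ) ^ (-((m:ℤ)+1)) := by
      intro i
      rw [hfac i, show (0:ℤ) ⊔ ((m:ℤ)+1-((0:ℕ):ℤ)) = (m:ℤ)+1 by push_cast; omega]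
    rw [prod_congr rfl fun i _ => this i, prod_const, card_univ, Fintype.card_fin]
    have hrz : r = (p:ℝ) ^ ((1:ℤ) - k) := by
      rw [hr, ← zpow_natCast (p:ℝ) (k-1), ← zpow_neg]
      congr 1
      push_cast [Nat.cast_sub (by omega : 1 ≤ k)]
      ring
    have hzp : (p:ℝ) ^ (m + 1) * ((p:ℝ) ^ (-((m:ℤ)+1))) ^ k = r ^ (m+1) := by
      rw [← zpow_natCast ((p:ℝ) ^ (-((m:ℤ)+1))) k, ← zpow_mul,
        ← zpow_natCast (p:ℝ) (m+1), ← zpow_add₀ hP0, hrz,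
        ← zpow_natCast ((p:ℝ)^((1:ℤ)-(k:ℤ))) (m+1), ← zpow_mul]
      congr 1
      push_cast
      ring
    rw [mul_assoc, hzp, pow_succ]
    ring
  rw [lfac, Summable.tsum_eq_zero_add (gtf_pow_summable hk ha hp), pow_zero, gtf_one]
  rw [tsum_congr hterm, tsum_mul_left, tsum_geometric_of_lt_one hr0 hr1]
  have hpk : (p:ℝ) ^ k = (p:ℝ) ^ (k-1) * (p:ℝ) := by
    rw [← pow_succ]; congr 1; omega
  have h1r : 1 - r ≠ 0 := by
    intro h
    have : r = 1 := by linarith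
    rw [this] at hr1; exact absurd hr1 (lt_irrefl 1)
  have hpk1' : (p:ℝ) ^ (k-1) ≠ 0 := by positivity
  rw [eq_div_iff h1r, add_mul, one_mul, mul_assoc ((1 - 1/(p:ℝ)) * r),
    inv_mul_cancel₀ h1r, mul_one, hpk, hr]
  field_simp
  ring

end Aux

section Zeta

noncomputable def zf (j : ℕ) (hj : j ≠ 0) : ℕ →*₀ ℝ where
  toFun n := ((n : ℝ) ^ j)⁻¹
  map_zero' := by simp [zero_pow hj]
  map_one' := by simp
  map_mul' m n := by push_cast; rw [mul_pow, mul_inv]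

lemma zf_summable {j : ℕ} (hj : 2 ≤ j) (h0 : j ≠ 0) : Summable (fun n => ‖zf j h0 n‖) := by
  simpa [zf, abs_of_nonneg, one_div] using Real.summable_nat_pow_inv.mpr (by omega : 1 < j)

lemma zetaR_hasProd {j : ℕ} (hj : 2 ≤ j) :
    HasProd (fun p : Nat.Primes => (1 - (((p:ℕ) : ℝ) ^ j)⁻¹)⁻¹) (zetaR j) := by
  have h0 : j ≠ 0 := by omega
  have hs := zf_summable hj h0
  have H := EulerProduct.eulerProduct_completely_multiplicative_hasProd hs
  have he : zetaR j = ∑' n, zf j h0 n := by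
    rw [Summable.tsum_eq_zero_add hs.of_norm, map_zero, zero_add, zetaR]
    apply tsum_congr
    intro n
    rw [Real.rpow_natCast, one_div]
    simp [zf]
  rw [he]
  exact H

lemma zetaR_pos {j : ℕ} (hj : 2 ≤ j) : 0 < zetaR j := by
  have h0 : j ≠ 0 := by omega
  have hs : Summable (fun n : ℕ => 1 / ((n:ℝ) + 1) ^ (j:ℝ)) := by
    have := (zf_summable hj h0).of_norm
    have h2 := (summable_nat_add_iff 1).mpr this
    apply h2.congr
    intro n
    rw [Real.rpow_natCast]
    simp [zf, one_div]
  exact Summable.tsum_pos hs (fun n => by positivity) 0 (by positivity)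

end Zeta

section Den

lemma den_facts {k : ℕ} (hk : 3 ≤ k) {p : ℕ} (hp : p.Prime) :
    (1:ℝ) < (p:ℝ) ^ (k-1) ∧ ((p:ℝ)^k - (p:ℝ) ≠ 0) ∧ (1 - ((p:ℝ)^(k-1))⁻¹ ≠ 0)
      ∧ (1 - ((p:ℝ)^k)⁻¹ ≠ 0) ∧ ((p:ℝ) ≠ 0) := by
  have hP : (2:ℝ) ≤ (p:ℝ) := by exact_mod_cast hp.two_le
  have h1 : (1:ℝ) < (p:ℝ) ^ (k-1) := one_lt_pow₀ (by linarith) (by omega)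
  have h1k : (1:ℝ) < (p:ℝ) ^ k := one_lt_pow₀ (by linarith) (by omega)
  have hpk : (p:ℝ) ^ k = (p:ℝ) ^ (k-1) * (p:ℝ) := by
    rw [← pow_succ]; congr 1; omega
  refine ⟨h1, ?_, ?_, ?_, by linarith⟩
  · rw [hpk]
    nlinarith
  · intro h
    have : ((p:ℝ)^(k-1))⁻¹ = 1 := by linarith
    rw [inv_eq_one] at this
    linarith
  · intro h
    have : ((p:ℝ)^k)⁻¹ = 1 := by linarith
    rw [inv_eq_one] at this
    linarith

lemma den_eq {k : ℕ} (hk : 3 ≤ k) {p : ℕ} (hp : p.Prime) :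
    1 + ((p:ℝ) - 1) / ((p:ℝ)^k - (p:ℝ)) =
      (1 - ((p:ℝ)^k)⁻¹) / (1 - ((p:ℝ)^(k-1))⁻¹) := by
  obtain ⟨h1, h2, h3, h4, h5⟩ := den_facts hk hp
  have hpk : (p:ℝ) ^ k = (p:ℝ) ^ (k-1) * (p:ℝ) := by
    rw [← pow_succ]; congr 1; omega
  have hP1 : ((p:ℝ)^(k-1)) ≠ 0 := by positivity
  field_simp
  rw [eq_div_iff (sub_ne_zero.mpr h1.ne'), hpk]
  ring

theorem gcd_totient_series_eval (k : ℕ) (hk : 3 ≤ k) (a : Fin k → ℤ)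
    (ha : ∀ i, a i ≠ 0) :
    ∑' ℓ : ℕ, (∏ i, (Int.gcd (a i) ((ℓ : ℤ) + 1) : ℝ)) * (Nat.totient (ℓ + 1) : ℝ) /
        ((ℓ : ℝ) + 1) ^ k =
      rho k a * (zetaR ((k : ℝ) - 1) / zetaR k) := by
  classical
  have hk2 : 2 ≤ k := by omega
  have hk12 : 2 ≤ k - 1 := by omega
  have hA : (∏ i, a i) ≠ 0 := Finset.prod_ne_zero_iff.mpr (fun i _ => ha i)
  have hAn : (∏ i, a i).natAbs ≠ 0 := Int.natAbs_ne_zero.mpr hA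
  set pf : Finset ℕ := (∏ i, a i).natAbs.primeFactors with hpf
  have hSnorm : Summable (fun n => ‖gtf k a n‖) :=
    (gtf_summable hk ha).congr (fun n => (Real.norm_of_nonneg (gtf_nonneg n)).symm)
  set T := ∑' n, gtf k a n with hT
  have hL : HasProd (fun q : Nat.Primes => lfac k a (q:ℕ)) T :=
    EulerProduct.eulerProduct_hasProd (f := gtf k a) gtf_one (fun h => gtf_mul h)
      hSnorm gtf_zero
  have hZk := zetaR_hasProd (j := k) hk2
  have hZk1 := zetaR_hasProd (j := k-1) hk12
  set g : ℕ → ℝ := fun p => lfac k a p * (1 - ((p:ℝ)^(k-1))⁻¹) * (1 - ((p:ℝ)^k)⁻¹)⁻¹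
    with hg
  set E : Nat.Primes → ℝ := fun q => g (q:ℕ) with hE
  set pf' : Finset Nat.Primes := pf.subtype Nat.Prime with hpf'
  have hEone : ∀ q ∉ pf', E q = 1 := by
    intro q hq
    have hq' : (q:ℕ) ∉ pf := fun h => hq (Finset.mem_subtype.mpr h)
    have hnd : ∀ i, ¬ ((q:ℕ):ℤ) ∣ a i := by
      intro i hdvd
      apply hq'
      rw [hpf, Nat.mem_primeFactors]
      refine ⟨q.2, ?_, hAn⟩
      have : ((q:ℕ):ℤ) ∣ ∏ i, a i := hdvd.trans (Finset.dvd_prod_of_mem a (mem_univ i))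
      exact Int.natCast_dvd.mp this
    obtain ⟨h1, h2, h3, h4, h5⟩ := den_facts hk q.2
    rw [hE]
    simp only [hg]
    rw [lfac_not_dvd hk ha q.2 hnd, div_mul_cancel₀ _ h3, mul_inv_cancel₀ h4]
  have hEprod : HasProd E (∏ q ∈ pf', E q) := hasProd_prod_of_ne_finset_one hEone
  have key : ∀ q : Nat.Primes, lfac k a (q:ℕ) * (1 - (((q:ℕ):ℝ)^k)⁻¹)⁻¹
      = E q * (1 - (((q:ℕ):ℝ)^(k-1))⁻¹)⁻¹ := by
    intro q
    obtain ⟨h1, h2, h3, h4, h5⟩ := den_facts hk q.2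
    rw [hE]
    simp only [hg]
    have hp2 : (2:ℝ) ≤ ((q:ℕ):ℝ) := by exact_mod_cast q.2.two_le
    have h6 : ((q:ℕ):ℝ)^(k-1) - 1 ≠ 0 := sub_ne_zero.mpr h1.ne'
    have h7 : ((q:ℕ):ℝ)^k - 1 ≠ 0 :=
      sub_ne_zero.mpr (one_lt_pow₀ (by linarith) (by omega : k ≠ 0)).ne'
    field_simp
  have h1 : HasProd (fun q : Nat.Primes => lfac k a (q:ℕ) * (1 - (((q:ℕ):ℝ)^k)⁻¹)⁻¹)
      (T * zetaR k) := hL.mul hZk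
  have h2 : HasProd (fun q : Nat.Primes => lfac k a (q:ℕ) * (1 - (((q:ℕ):ℝ)^k)⁻¹)⁻¹)
      ((∏ q ∈ pf', E q) * zetaR ((k-1 : ℕ) : ℝ)) := by
    rw [show (fun q : Nat.Primes => lfac k a (q:ℕ) * (1 - (((q:ℕ):ℝ)^k)⁻¹)⁻¹)
      = fun q => E q * (1 - (((q:ℕ):ℝ)^(k-1))⁻¹)⁻¹ from funext key]
    exact hEprod.mul hZk1
  have heq : T * zetaR k = (∏ q ∈ pf', E q) * zetaR ((k-1 : ℕ) : ℝ) := h1.unique h2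
  have step : (∏ q ∈ pf', E q) = ∏ p ∈ pf, g p :=
    Finset.prod_subtype_of_mem g (fun x hx => Nat.prime_of_mem_primeFactors hx)
  have hrho : rho k a = ∏ q ∈ pf', E q := by
    rw [step, rho]
    apply Finset.prod_congr rfl
    intro p hpmem
    have hpp : p.Prime := Nat.prime_of_mem_primeFactors hpmem
    rw [← lfac_eq hk ha hpp, den_eq hk hpp, hg]
    rw [div_div_eq_mul_div, div_eq_mul_inv]
  have hzk0 : zetaR (k:ℝ) ≠ 0 := (zetaR_pos hk2).ne'
  have hsum_eq : (∑' ℓ : ℕ, (∏ i, (Int.gcd (a i) ((ℓ : ℤ) + 1) : ℝ)) *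
      (Nat.totient (ℓ + 1) : ℝ) / ((ℓ : ℝ) + 1) ^ k) = T := by
    rw [hT, Summable.tsum_eq_zero_add (gtf_summable hk ha), gtf_zero, zero_add]
    apply tsum_congr
    intro ℓ
    unfold gtf
    norm_cast
  have hcast : ((k:ℝ) - 1) = ((k-1 : ℕ) : ℝ) := by
    push_cast [Nat.cast_sub (by omega : 1 ≤ k)]
    ring
  rw [hsum_eq, hcast, hrho, ← mul_div_assoc, eq_div_iff hzk0]
  exact heq
end Den
end
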